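/- arXiv:0709.2593 — 5 statements merged into one kernel-verified Lean document; each statement's English description precedes it below -/
import Mathlib

section
/- For every integer n ≥ 4, (n+2) ∑_{k=2}^{n-2} B_k B_{n-k} = 2 ∑_{k=2}^{n-2} C(n+2,k) B_k B_{n-k} + n(n+1) B_n. -/
open PowerSeries Finset

noncomputable section
namespace Maty

abbrev A := Polynomial ℚ
def u : A := Polynomial.X
def v : A := 1 - Polynomial.X

def B : PowerSeries A := bernoulliPowerSeries A

lemma key : rescale u B * rescale v B =
    B * (PowerSeries.C (R := A) v * rescale u B + PowerSeries.C (R := A) u * rescale v B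
      + PowerSeries.C (R := A) (u * v) * PowerSeries.X) := by
  set Eu : PowerSeries A := rescale u (exp A) - 1 with hEu
  set Ev : PowerSeries A := rescale v (exp A) - 1 with hEv
  set E : PowerSeries A := exp A - 1 with hE
  have hB : B = bernoulliPowerSeries A := rfl
  have h1 : rescale u B * Eu = PowerSeries.C (R := A) u * PowerSeries.X := by
    rw [hEu, ← rescale_X u, ← map_one (rescale u), ← map_sub, ← map_mul, hB,
      bernoulliPowerSeries_mul_exp_sub_one, rescale_X]
  have h2 : rescale v B * Ev = PowerSeries.C (R := A) v * PowerSeries.X := by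
    rw [hEv, ← rescale_X v, ← map_one (rescale v), ← map_sub, ← map_mul, hB,
      bernoulliPowerSeries_mul_exp_sub_one, rescale_X]
  have h3 : B * E = PowerSeries.X := bernoulliPowerSeries_mul_exp_sub_one A
  have h4 : Eu + Ev + Eu * Ev = E := by
    have := exp_mul_exp_eq_exp_add u v
    have huv : u + v = 1 := by simp [u, v]
    rw [huv, rescale_one] at this
    simp only [hEu, hEv, hE]
    rw [RingHom.id_apply] at this
    ring_nf
    rw [mul_comm] at this
    linear_combination this
  have hne : E * (Eu * Ev) ≠ 0 := by
    apply mul_ne_zero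
    · intro h
      have := congrArg (PowerSeries.coeff (R := A) 1) h
      simp [hE, exp, coeff_mk] at this
    · apply mul_ne_zero
      · intro h
        have := congrArg (PowerSeries.coeff (R := A) 1) h
        simp [hEu, coeff_rescale, exp, coeff_mk, u] at this
      · intro h
        have := congrArg (PowerSeries.coeff (R := A) 1) h
        simp [hEv, coeff_rescale, exp, coeff_mk, v] at this
        have h2 := congrArg (fun p => Polynomial.coeff p 1) this
        simp [Polynomial.coeff_one] at h2
  apply mul_right_cancel₀ hne
  have expand : B * (PowerSeries.C (R := A) v * rescale u B + PowerSeries.C (R := A) u * rescale v B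
      + PowerSeries.C (R := A) (u * v) * PowerSeries.X) * (E * (Eu * Ev)) =
      (B * E) * (PowerSeries.C (R := A) v * (rescale u B * Eu) * Ev
        + PowerSeries.C (R := A) u * (rescale v B * Ev) * Eu
        + PowerSeries.C (R := A) (u * v) * PowerSeries.X * (Eu * Ev)) := by ring
  rw [expand, h1, h2, h3]
  calc rescale u B * rescale v B * (E * (Eu * Ev))
      = (rescale u B * Eu) * (rescale v B * Ev) * E := by ring
    _ = PowerSeries.C (R := A) (u*v) * PowerSeries.X^2 * E := by rw [h1, h2, map_mul]; ring
    _ = PowerSeries.X * (PowerSeries.C (R := A) v * (PowerSeries.C (R := A) u * PowerSeries.X) * Ev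
        + PowerSeries.C (R := A) u * (PowerSeries.C (R := A) v * PowerSeries.X) * Eu
        + PowerSeries.C (R := A) (u * v) * PowerSeries.X * (Eu * Ev)) := by
        rw [← h4, map_mul]; ring

def q (k : ℕ) : ℚ := bernoulli k / k.factorial

lemma coeff_B (k : ℕ) : PowerSeries.coeff (R := A) k B = Polynomial.C (q k) := by
  simp [B, bernoulliPowerSeries, coeff_mk, Polynomial.algebraMap_eq, q]

lemma poly_id (m : ℕ) :
    ∑ k ∈ range (m + 2), (q k * q (m + 1 - k)) •
        (Polynomial.X ^ k * (1 - Polynomial.X) ^ (m + 1 - k) : A) =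
      (∑ k ∈ range (m + 2), (q k * q (m + 1 - k)) •
        ((1 - Polynomial.X) * Polynomial.X ^ k + Polynomial.X * (1 - Polynomial.X) ^ k : A))
      + q m • (Polynomial.X * (1 - Polynomial.X)) := by
  have h := congrArg (PowerSeries.coeff (R := A) (m + 1)) key
  rw [mul_add, mul_add, map_add, map_add] at h
  rw [show B * (PowerSeries.C (R := A) (u * v) * PowerSeries.X)
      = PowerSeries.C (R := A) (u * v) * (B * PowerSeries.X) by ring,
    coeff_C_mul, coeff_succ_mul_X, coeff_B] at h
  rw [show B * (PowerSeries.C (R := A) v * rescale u B)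
      = PowerSeries.C (R := A) v * (B * rescale u B) by ring,
    show B * (PowerSeries.C (R := A) u * rescale v B)
      = PowerSeries.C (R := A) u * (B * rescale v B) by ring,
    coeff_C_mul, coeff_C_mul] at h
  simp only [coeff_mul, Nat.sum_antidiagonal_eq_sum_range_succ_mk, coeff_rescale, coeff_B,
    Finset.mul_sum] at h
  have r1 : ∑ i ∈ range (m + 2), v * (Polynomial.C (q i) * (u ^ (m + 1 - i) * Polynomial.C (q (m + 1 - i))))
      = ∑ k ∈ range (m + 2), (q k * q (m + 1 - k)) • ((1 - Polynomial.X) * Polynomial.X ^ k : A) := by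
    rw [← Finset.sum_range_reflect]
    refine Finset.sum_congr rfl fun i hi => ?_
    have hi' : i ≤ m + 1 := by simpa [Nat.lt_succ_iff] using hi
    rw [show m + 2 - 1 - i = m + 1 - i by omega, show m + 1 - (m + 1 - i) = i by omega]
    simp only [Polynomial.smul_eq_C_mul, u, v, map_mul]; ring
  have r2 : ∑ i ∈ range (m + 2), u * (Polynomial.C (q i) * (v ^ (m + 1 - i) * Polynomial.C (q (m + 1 - i))))
      = ∑ k ∈ range (m + 2), (q k * q (m + 1 - k)) • (Polynomial.X * (1 - Polynomial.X) ^ k : A) := by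
    rw [← Finset.sum_range_reflect]
    refine Finset.sum_congr rfl fun i hi => ?_
    have hi' : i ≤ m + 1 := by simpa [Nat.lt_succ_iff] using hi
    rw [show m + 2 - 1 - i = m + 1 - i by omega, show m + 1 - (m + 1 - i) = i by omega]
    simp only [Polynomial.smul_eq_C_mul, u, v, map_mul]; ring
  calc ∑ k ∈ range (m + 2), (q k * q (m + 1 - k)) •
        (Polynomial.X ^ k * (1 - Polynomial.X) ^ (m + 1 - k) : A)
      = ∑ k ∈ range (m + 2), u ^ k * Polynomial.C (q k) * ((v ^ (m + 1 - k)) * Polynomial.C (q (m + 1 - k))) := by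
        refine Finset.sum_congr rfl fun k _ => ?_
        simp only [Polynomial.smul_eq_C_mul, u, v, map_mul]; ring
    _ = _ := by
        rw [h, r1, r2, ← Finset.sum_add_distrib]
        congr 1
        · refine Finset.sum_congr rfl fun k _ => ?_
          rw [smul_add]
        · simp only [Polynomial.smul_eq_C_mul, u, v, map_mul]; ring

def I : A →ₗ[ℚ] ℚ := Polynomial.lsum (fun k => (1 / (k + 1 : ℚ)) • LinearMap.id)

lemma I_monomial (k : ℕ) (a : ℚ) : I (Polynomial.monomial k a) = a / (k + 1) := by
  simp [I, Polynomial.lsum_apply, Polynomial.sum_monomial_index, div_eq_inv_mul]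

lemma I_beta (b a : ℕ) : I (Polynomial.X ^ a * (1 - Polynomial.X) ^ b : A)
    = (a.factorial * b.factorial : ℚ) / (a + b + 1).factorial := by
  induction b generalizing a with
  | zero =>
      rw [show (Polynomial.X ^ a * (1 - Polynomial.X) ^ 0 : A) = Polynomial.monomial a 1 by
        simp [Polynomial.X_pow_eq_monomial], I_monomial]
      rw [show a + 0 + 1 = a + 1 by omega, Nat.factorial_succ]
      push_cast
      rw [Nat.factorial_zero]
      have h1 : (a.factorial : ℚ) ≠ 0 := Nat.cast_ne_zero.mpr (Nat.factorial_ne_zero a)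
      have h2 : (a : ℚ) + 1 ≠ 0 := by positivity
      field_simp
      norm_num
  | succ b ih =>
      have hsplit : (Polynomial.X ^ a * (1 - Polynomial.X) ^ (b + 1) : A)
          = Polynomial.X ^ a * (1 - Polynomial.X) ^ b
            - Polynomial.X ^ (a + 1) * (1 - Polynomial.X) ^ b := by ring
      rw [hsplit, map_sub, ih a, ih (a + 1)]
      rw [show a + (b + 1) + 1 = (a + b + 1) + 1 by omega,
        show a + 1 + b + 1 = (a + b + 1) + 1 by omega]
      rw [Nat.factorial_succ (a + b + 1), Nat.factorial_succ a, Nat.factorial_succ b]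
      have h1 : (a.factorial : ℚ) ≠ 0 := Nat.cast_ne_zero.mpr (Nat.factorial_ne_zero a)
      have h2 : (b.factorial : ℚ) ≠ 0 := Nat.cast_ne_zero.mpr (Nat.factorial_ne_zero b)
      have h3 : ((a + b + 1).factorial : ℚ) ≠ 0 :=
        Nat.cast_ne_zero.mpr (Nat.factorial_ne_zero _)
      have h4 : ((a : ℚ) + (b : ℚ) + 1 + 1) ≠ 0 := by positivity
      push_cast
      field_simp
      ring

lemma master (n : ℕ) (hn : 1 ≤ n) :
    ((n : ℚ) + 2) * ∑ k ∈ range (n + 1), bernoulli k * bernoulli (n - k) =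
      2 * ∑ k ∈ range (n + 1), ((n + 2).choose (k + 2) : ℚ) * (bernoulli k * bernoulli (n - k))
      + ((n + 2).choose 3 : ℚ) * bernoulli (n - 1) := by
  obtain ⟨m, rfl⟩ : ∃ m, n = m + 1 := ⟨n - 1, by omega⟩
  set n := m + 1 with hn'
  have h := congrArg I (poly_id m)
  rw [map_add, map_sum, map_sum, map_smul] at h
  have e1 : ∑ k ∈ range (n + 1), I ((q k * q (n - k)) •
        (Polynomial.X ^ k * (1 - Polynomial.X) ^ (n - k) : A))
      = ∑ k ∈ range (n + 1), (q k * q (n - k)) *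
        ((k.factorial * (n - k).factorial : ℚ) / (n + 1).factorial) := by
    refine Finset.sum_congr rfl fun k hk => ?_
    have hk' : k ≤ n := by simpa [Nat.lt_succ_iff] using hk
    rw [map_smul, smul_eq_mul, I_beta, show k + (n - k) + 1 = n + 1 by omega]
  have e2 : ∑ k ∈ range (n + 1), I ((q k * q (n - k)) •
        ((1 - Polynomial.X) * Polynomial.X ^ k + Polynomial.X * (1 - Polynomial.X) ^ k : A))
      = ∑ k ∈ range (n + 1), (q k * q (n - k)) *
        (2 * ((k.factorial : ℚ) / (k + 2).factorial)) := by
    refine Finset.sum_congr rfl fun k hk => ?_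
    rw [map_smul, smul_eq_mul,
      show ((1 - Polynomial.X) * Polynomial.X ^ k + Polynomial.X * (1 - Polynomial.X) ^ k : A)
        = Polynomial.X ^ k * (1 - Polynomial.X) ^ 1 + Polynomial.X ^ 1 * (1 - Polynomial.X) ^ k
        by ring,
      map_add, I_beta, I_beta, show k + 1 + 1 = k + 2 by omega, show 1 + k + 1 = k + 2 by omega]
    rw [Nat.factorial_one]
    push_cast
    ring
  have e3 : q m • I (Polynomial.X * (1 - Polynomial.X) : A) = q m * (1 / 6) := by
    rw [smul_eq_mul,
      show (Polynomial.X * (1 - Polynomial.X) : A)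
        = Polynomial.X ^ 1 * (1 - Polynomial.X) ^ 1 by ring, I_beta]
    norm_num [Nat.factorial]
  rw [e1, e2, e3] at h
  -- now multiply by (n+2)!
  have hfac : ∀ j : ℕ, ((j.factorial : ℚ)) ≠ 0 :=
    fun j => Nat.cast_ne_zero.mpr (Nat.factorial_ne_zero j)
  calc ((n : ℚ) + 2) * ∑ k ∈ range (n + 1), bernoulli k * bernoulli (n - k)
      = ((n + 2).factorial : ℚ) * ∑ k ∈ range (n + 1), (q k * q (n - k)) *
        ((k.factorial * (n - k).factorial : ℚ) / (n + 1).factorial) := by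
        rw [Finset.mul_sum, Finset.mul_sum]
        refine Finset.sum_congr rfl fun k hk => ?_
        have hk' : k ≤ n := by simpa [Nat.lt_succ_iff] using hk
        rw [q, q, show n + 2 = (n + 1) + 1 by omega, Nat.factorial_succ (n + 1)]
        push_cast
        field_simp
        ring
    _ = ((n + 2).factorial : ℚ) * (∑ k ∈ range (n + 1), (q k * q (n - k)) *
        (2 * ((k.factorial : ℚ) / (k + 2).factorial)) + q m * (1 / 6)) := by rw [h]
    _ = 2 * ∑ k ∈ range (n + 1), ((n + 2).choose (k + 2) : ℚ) * (bernoulli k * bernoulli (n - k))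
        + ((n + 2).choose 3 : ℚ) * bernoulli (n - 1) := by
        rw [mul_add, Finset.mul_sum, Finset.mul_sum]
        congr 1
        · refine Finset.sum_congr rfl fun k hk => ?_
          have hk' : k ≤ n := by simpa [Nat.lt_succ_iff] using hk
          rw [q, q, Nat.cast_choose ℚ (show k + 2 ≤ n + 2 by omega),
            show n + 2 - (k + 2) = n - k by omega]
          push_cast
          field_simp
        · rw [q, Nat.cast_choose ℚ (show 3 ≤ n + 2 by omega),
            show n + 2 - 3 = m by omega, show n - 1 = m by omega]
          push_cast
          rw [show (Nat.factorial 3 : ℚ) = 6 by norm_num [Nat.factorial]]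
          field_simp

end Maty
end

lemma bernoulli_odd_zero {k : ℕ} (h : Odd k) (hk : 1 < k) : bernoulli k = 0 := by
  rw [bernoulli_eq_bernoulli'_of_ne_one (by omega), bernoulli'_eq_zero_of_odd h hk]

/-- Matiyasevich's identity on Bernoulli numbers. -/
theorem matiyasevich_identity (n : ℕ) (hn : 4 ≤ n) :
    ((n : ℚ) + 2) * ∑ k ∈ Finset.Icc 2 (n - 2), bernoulli k * bernoulli (n - k) =
      2 * ∑ k ∈ Finset.Icc 2 (n - 2), ((n + 2).choose k : ℚ) * bernoulli k * bernoulli (n - k) +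
      (n : ℚ) * ((n : ℚ) + 1) * bernoulli n := by
  rcases Nat.even_or_odd n with he | ho
  · have h1 : bernoulli (n - 1) = 0 :=
      bernoulli_odd_zero (Nat.Even.sub_odd (by omega) he odd_one) (by omega)
    have hm := Maty.master n (by omega)
    have hset : Finset.range (n + 1)
        = insert 0 (insert 1 (insert (n - 1) (insert n (Finset.Icc 2 (n - 2))))) := by
      ext x
      simp only [Finset.mem_range, Finset.mem_insert, Finset.mem_Icc]
      omega
    rw [hset,
      Finset.sum_insert (by simp only [Finset.mem_insert, Finset.mem_Icc]; omega),
      Finset.sum_insert (by simp only [Finset.mem_insert, Finset.mem_Icc]; omega),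
      Finset.sum_insert (by simp only [Finset.mem_insert, Finset.mem_Icc]; omega),
      Finset.sum_insert (by simp only [Finset.mem_Icc]; omega)] at hm
    rw [Finset.sum_insert (by simp only [Finset.mem_insert, Finset.mem_Icc]; omega),
      Finset.sum_insert (by simp only [Finset.mem_insert, Finset.mem_Icc]; omega),
      Finset.sum_insert (by simp only [Finset.mem_insert, Finset.mem_Icc]; omega),
      Finset.sum_insert (by simp only [Finset.mem_Icc]; omega)] at hm
    simp only [h1, bernoulli_zero, Nat.sub_zero, Nat.sub_self, mul_zero, zero_mul, mul_one,
      one_mul, Nat.choose_self, Nat.cast_one, add_zero, zero_add,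
      show n - (n - 1) = 1 by omega] at hm
    have hC2 : ((n + 2).choose 2 : ℚ) = ((n : ℚ) + 2) * ((n : ℚ) + 1) / 2 := by
      rw [Nat.cast_choose ℚ (by omega), show n + 2 - 2 = n by omega,
        show n + 2 = (n + 1) + 1 by omega, Nat.factorial_succ (n + 1), Nat.factorial_succ n]
      have h2 : ((Nat.factorial 2 : ℕ) : ℚ) = 2 := by norm_num [Nat.factorial]
      rw [h2]
      have h3 : (n.factorial : ℚ) ≠ 0 := Nat.cast_ne_zero.mpr (Nat.factorial_ne_zero n)
      push_cast
      field_simp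
      ring
    have hT : ∑ k ∈ Finset.Icc 2 (n - 2), ((n + 2).choose (k + 2) : ℚ) *
          (bernoulli k * bernoulli (n - k))
        = ∑ k ∈ Finset.Icc 2 (n - 2), ((n + 2).choose k : ℚ) * bernoulli k * bernoulli (n - k) := by
      refine Finset.sum_nbij' (fun k => n - k) (fun k => n - k) ?_ ?_ ?_ ?_ ?_
      · intro a ha; simp only [Finset.mem_Icc] at *; omega
      · intro a ha; simp only [Finset.mem_Icc] at *; omega
      · intro a ha; simp only [Finset.mem_Icc] at ha; omega
      · intro a ha; simp only [Finset.mem_Icc] at ha; omega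
      · intro a ha
        simp only [Finset.mem_Icc] at ha
        rw [show n - (n - a) = a by omega,
          show ((n + 2).choose (n - a) : ℚ) = ((n + 2).choose (a + 2) : ℚ) by
            rw [← Nat.choose_symm (show n - a ≤ n + 2 by omega),
              show n + 2 - (n - a) = a + 2 by omega]]
        ring
    rw [hT, hC2] at hm
    linear_combination hm
  · have hn0 : bernoulli n = 0 := bernoulli_odd_zero ho (by omega)
    have hz : ∀ k ∈ Finset.Icc 2 (n - 2), bernoulli k * bernoulli (n - k) = 0 := by
      intro k hk
      simp only [Finset.mem_Icc] at hk
      rcases Nat.even_or_odd k with hek | hok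
      · rw [bernoulli_odd_zero (Nat.Odd.sub_even (by omega) ho hek) (by omega), mul_zero]
      · rw [bernoulli_odd_zero hok (by omega), zero_mul]
    rw [Finset.sum_eq_zero hz, Finset.sum_eq_zero
      (fun k hk => by rw [mul_assoc, hz k hk, mul_zero]), hn0]
    ring
end

section
/- Let m, n be positive integers, r_1,…,r_m complex numbers, and set r_{m+1} = n − r_1 − ⋯ − r_m. Then for any complex x_1,…,x_m: r_{m+1} ∑_{k_1+⋯+k_m=n, k_i≥0} ∏_{j=1}^m C(r_j,k_j) B_{k_j}(x_j) = − ∑_{i=1}^m r_i ∑_{k_1+⋯+k_m=n, k_i≥0} C(r_{m+1},k_i) B_{k_i}(1−x_i) ∏_{j≠i} C(r_j,k_j) B_{k_j}(x_j − x_i + 1_{j>i}), where 1_{j>i} equals 1 if j > i and 0 otherwise. -/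
open Finset

/-- The `n`-th Bernoulli polynomial evaluated at a complex number. -/
noncomputable def Bp (n : ℕ) (x : ℂ) : ℂ := Polynomial.aeval x (Polynomial.bernoulli n)

/-- The generalized binomial coefficient `C(r,k) = r(r-1)⋯(r-k+1)/k!` for complex `r`. -/
noncomputable def gchoose (r : ℂ) (k : ℕ) : ℂ :=
  (∏ i ∈ Finset.range k, (r - i)) / (k.factorial : ℂ)

lemma gchoose_zero (r : ℂ) : gchoose r 0 = 1 := by simp [gchoose]

lemma gchoose_one (r : ℂ) : gchoose r 1 = r := by simp [gchoose]

lemma gchoose_zero_left_succ (k : ℕ) : gchoose 0 (k + 1) = 0 := by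
  simp [gchoose, Finset.prod_range_succ']

lemma gchoose_succ (r : ℂ) (k : ℕ) :
    ((k : ℂ) + 1) * gchoose r (k + 1) = (r - k) * gchoose r k := by
  have h0 : ((k : ℂ) + 1) ≠ 0 := by
    exact_mod_cast Nat.cast_add_one_ne_zero (R := ℂ) k
  have hf : ((k + 1).factorial : ℂ) = ((k : ℂ) + 1) * (k.factorial : ℂ) := by
    push_cast [Nat.factorial_succ]; ring
  have hfk : (k.factorial : ℂ) ≠ 0 := by
    exact_mod_cast Nat.cast_ne_zero.2 (Nat.factorial_ne_zero k)
  simp only [gchoose, hf, Finset.prod_range_succ]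
  field_simp

lemma gchoose_pred (r : ℂ) (k : ℕ) :
    r * gchoose (r - 1) k = (r - k) * gchoose r k := by
  have key : r * ∏ i ∈ Finset.range k, (r - 1 - (i : ℂ))
      = (r - k) * ∏ i ∈ Finset.range k, (r - (i : ℂ)) := by
    have h1 : ∏ i ∈ Finset.range k, (r - 1 - (i : ℂ))
        = ∏ i ∈ Finset.range k, (r - ((i + 1 : ℕ) : ℂ)) :=
      Finset.prod_congr rfl fun i _ => by push_cast; ring
    have h2 := Finset.prod_range_succ' (fun i : ℕ => r - (i : ℂ)) k
    have h3 := Finset.prod_range_succ (fun i : ℕ => r - (i : ℂ)) k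
    rw [h1]
    calc r * ∏ i ∈ Finset.range k, (r - ((i + 1 : ℕ) : ℂ))
        = (∏ i ∈ Finset.range k, (r - ((i + 1 : ℕ) : ℂ))) * (r - ((0 : ℕ) : ℂ)) := by
          push_cast; ring
      _ = ∏ i ∈ Finset.range (k + 1), (r - (i : ℂ)) := h2.symm
      _ = (∏ i ∈ Finset.range k, (r - (i : ℂ))) * (r - k) := h3
      _ = (r - k) * ∏ i ∈ Finset.range k, (r - (i : ℂ)) := by ring
  have hfk : ((k.factorial : ℕ) : ℂ) ≠ 0 :=
    Nat.cast_ne_zero.2 (Nat.factorial_ne_zero k)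
  unfold gchoose
  field_simp
  linear_combination key

lemma gchoose_succ' (r : ℂ) (k : ℕ) :
    ((k : ℂ) + 1) * gchoose r (k + 1) = r * gchoose (r - 1) k := by
  rw [gchoose_succ, gchoose_pred]

lemma gchoose_mul_self_sub (r : ℂ) (k : ℕ) :
    (k : ℂ) * gchoose r k = r * (gchoose r k - gchoose (r - 1) k) := by
  linear_combination gchoose_pred r k

lemma Bp_zero (x : ℂ) : Bp 0 x = 1 := by simp [Bp]

lemma Bp_one_sub_zero (k : ℕ) : Bp k 1 - Bp k 0 = if k = 1 then 1 else 0 := by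
  have h0 : Bp k 0 = algebraMap ℚ ℂ (_root_.bernoulli k) := by
    rw [Bp, show ((0:ℂ)) = algebraMap ℚ ℂ 0 by simp, Polynomial.aeval_algebraMap_apply]
    simp [Polynomial.bernoulli_eval_zero]
  have h1 : Bp k 1 = algebraMap ℚ ℂ (bernoulli' k) := by
    rw [Bp, show ((1:ℂ)) = algebraMap ℚ ℂ 1 by simp, Polynomial.aeval_algebraMap_apply]
    simp [Polynomial.bernoulli_eval_one]
  rw [h0, h1]
  rcases eq_or_ne k 1 with hk | hk
  · subst hk
    rw [bernoulli'_one, bernoulli_one]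
    norm_num
  · rw [bernoulli_eq_bernoulli'_of_ne_one hk]
    simp [hk]

lemma Bp_hasDerivAt (k : ℕ) (x : ℂ) :
    HasDerivAt (fun x => Bp k x) ((k : ℂ) * Bp (k - 1) x) x := by
  have h := (Polynomial.bernoulli k).hasDerivAt_aeval x
  rw [Polynomial.derivative_bernoulli k] at h
  simpa [Bp, map_mul] using h

lemma Bp_affine_hasDerivAt (k : ℕ) (u v t : ℂ) :
    HasDerivAt (fun s => Bp k (u + s * v)) ((k : ℂ) * Bp (k - 1) (u + t * v) * v) t := by
  have h1 : HasDerivAt (fun s : ℂ => u + s * v) v t := by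
    simpa using ((hasDerivAt_id t).mul_const v).const_add u
  exact (Bp_hasDerivAt k (u + t * v)).comp t h1

noncomputable def W (M ν : ℕ) (ρ y : Fin M → ℂ) : ℂ :=
  ∑ k ∈ Finset.Nat.antidiagonalTuple M ν, ∏ j, gchoose (ρ j) (k j) * Bp (k j) (y j)

lemma W_zero (M : ℕ) (ρ y : Fin M → ℂ) : W M 0 ρ y = 1 := by
  rw [W, Finset.Nat.antidiagonalTuple_zero_right, Finset.sum_singleton]
  simp [gchoose_zero, Bp_zero]

lemma sum_cast_of_mem {M ν : ℕ} {k : Fin M → ℕ}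
    (h : k ∈ Finset.Nat.antidiagonalTuple M ν) : (∑ j, (k j : ℂ)) = ν := by
  have h' := Finset.Nat.mem_antidiagonalTuple.1 h
  exact_mod_cast congrArg (Nat.cast : ℕ → ℂ) h'

lemma W1 (M ν : ℕ) (ρ y : Fin M → ℂ) :
    ∑ l, ρ l * W M ν (Function.update ρ l (ρ l - 1)) y
      = ((∑ l, ρ l) - ν) * W M ν ρ y := by
  unfold W
  rw [Finset.mul_sum]
  simp_rw [Finset.mul_sum]
  rw [Finset.sum_comm]
  refine Finset.sum_congr rfl fun k hk => ?_
  have hks : (∑ j, (k j : ℂ)) = ν := sum_cast_of_mem hk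
  have hprod : ∀ l : Fin M,
      (∏ j, gchoose (Function.update ρ l (ρ l - 1) j) (k j) * Bp (k j) (y j))
      = gchoose (ρ l - 1) (k l) * Bp (k l) (y l)
        * ∏ j ∈ Finset.univ.erase l, gchoose (ρ j) (k j) * Bp (k j) (y j) := by
    intro l
    rw [← Finset.mul_prod_erase Finset.univ _ (Finset.mem_univ l)]
    congr 1
    · simp
    · exact Finset.prod_congr rfl fun j hj => by
        rw [Function.update_of_ne (Finset.ne_of_mem_erase hj)]
  have hfull : ∀ l : Fin M, (∏ j, gchoose (ρ j) (k j) * Bp (k j) (y j))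
      = gchoose (ρ l) (k l) * Bp (k l) (y l)
        * ∏ j ∈ Finset.univ.erase l, gchoose (ρ j) (k j) * Bp (k j) (y j) :=
    fun l => (Finset.mul_prod_erase Finset.univ _ (Finset.mem_univ l)).symm
  calc ∑ l, ρ l * ∏ j, gchoose (Function.update ρ l (ρ l - 1) j) (k j) * Bp (k j) (y j)
      = ∑ l, (ρ l - k l) * ∏ j, gchoose (ρ j) (k j) * Bp (k j) (y j) := by
        refine Finset.sum_congr rfl fun l _ => ?_
        rw [hprod l, hfull l]
        have := gchoose_pred (ρ l) (k l)
        linear_combination (Bp (k l) (y l)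
          * ∏ j ∈ Finset.univ.erase l, gchoose (ρ j) (k j) * Bp (k j) (y j)) * this
    _ = ((∑ l, ρ l) - ν) * ∏ j, gchoose (ρ j) (k j) * Bp (k j) (y j) := by
        rw [← Finset.sum_mul, Finset.sum_sub_distrib, hks]

lemma sum_adT_succ (M ν : ℕ) (l : Fin M) (f : (Fin M → ℕ) → ℂ)
    (hf : ∀ k, k l = 0 → f k = 0) :
    ∑ k ∈ Finset.Nat.antidiagonalTuple M (ν + 1), f k
      = ∑ k ∈ Finset.Nat.antidiagonalTuple M ν, f (Function.update k l (k l + 1)) := by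
  rw [← Finset.sum_filter_of_ne (p := fun k => k l ≠ 0)
    (fun k _ h => fun h0 => h (hf k h0))]
  refine Finset.sum_nbij' (i := fun k => Function.update k l (k l - 1))
    (j := fun k => Function.update k l (k l + 1)) ?_ ?_ ?_ ?_ ?_
  · intro k hk
    rw [Finset.mem_filter, Finset.Nat.mem_antidiagonalTuple] at hk
    rw [Finset.Nat.mem_antidiagonalTuple]
    obtain ⟨hsum, hne⟩ := hk
    rw [Finset.sum_update_of_mem (Finset.mem_univ l)]
    rw [Finset.sum_eq_sum_sdiff_singleton_add (Finset.mem_univ l) k] at hsum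
    omega
  · intro k hk
    rw [Finset.Nat.mem_antidiagonalTuple] at hk
    rw [Finset.mem_filter, Finset.Nat.mem_antidiagonalTuple]
    constructor
    · rw [Finset.sum_update_of_mem (Finset.mem_univ l)]
      rw [Finset.sum_eq_sum_sdiff_singleton_add (Finset.mem_univ l) k] at hk
      omega
    · simp
  · intro k hk
    rw [Finset.mem_filter] at hk
    funext j
    rcases eq_or_ne j l with rfl | hj
    · simp [Function.update_self]
      omega
    · simp [Function.update_of_ne hj]
  · intro k hk
    funext j
    rcases eq_or_ne j l with rfl | hj
    · simp [Function.update_self]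
    · simp [Function.update_of_ne hj]
  · intro k hk
    rw [Finset.mem_filter] at hk
    congr 1
    funext j
    rcases eq_or_ne j l with rfl | hj
    · simp [Function.update_self]
      omega
    · simp [Function.update_of_ne hj]

lemma W_hasDerivAt (M ν : ℕ) (ρ u v : Fin M → ℂ) (t : ℂ) :
    HasDerivAt (fun s => W M (ν + 1) ρ (fun j => u j + s * v j))
      (∑ l, v l * ρ l * W M ν (Function.update ρ l (ρ l - 1)) (fun j => u j + t * v j)) t := by
  have hterm : ∀ k : Fin M → ℕ,
      HasDerivAt (fun s => ∏ j, gchoose (ρ j) (k j) * Bp (k j) (u j + s * v j))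
        (∑ l, (∏ j ∈ Finset.univ.erase l, gchoose (ρ j) (k j) * Bp (k j) (u j + t * v j))
          • (gchoose (ρ l) (k l) * ((k l : ℂ) * Bp (k l - 1) (u l + t * v l) * v l))) t := by
    intro k
    exact HasDerivAt.fun_finsetProd fun l _ =>
      (Bp_affine_hasDerivAt (k l) (u l) (v l) t).const_mul (gchoose (ρ l) (k l))
  have hsum : HasDerivAt (fun s => W M (ν + 1) ρ (fun j => u j + s * v j))
      (∑ k ∈ Finset.Nat.antidiagonalTuple M (ν + 1), ∑ l,
        (∏ j ∈ Finset.univ.erase l, gchoose (ρ j) (k j) * Bp (k j) (u j + t * v j))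
          • (gchoose (ρ l) (k l) * ((k l : ℂ) * Bp (k l - 1) (u l + t * v l) * v l))) t := by
    unfold W
    exact HasDerivAt.fun_sum fun k _ => hterm k
  have hval : (∑ k ∈ Finset.Nat.antidiagonalTuple M (ν + 1), ∑ l,
        (∏ j ∈ Finset.univ.erase l, gchoose (ρ j) (k j) * Bp (k j) (u j + t * v j))
          • (gchoose (ρ l) (k l) * ((k l : ℂ) * Bp (k l - 1) (u l + t * v l) * v l)))
      = ∑ l, v l * ρ l * W M ν (Function.update ρ l (ρ l - 1)) (fun j => u j + t * v j) := by
    rw [Finset.sum_comm]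
    refine Finset.sum_congr rfl fun l _ => ?_
    have hvan : ∀ k : Fin M → ℕ, k l = 0 →
        (∏ j ∈ Finset.univ.erase l, gchoose (ρ j) (k j) * Bp (k j) (u j + t * v j))
          • (gchoose (ρ l) (k l) * ((k l : ℂ) * Bp (k l - 1) (u l + t * v l) * v l)) = 0 := by
      intro k hk
      rw [hk]
      simp
    rw [sum_adT_succ M ν l _ hvan]
    unfold W
    rw [Finset.mul_sum]
    refine Finset.sum_congr rfl fun k hk => ?_
    have h1 : ∀ j, j ≠ l → Function.update k l (k l + 1) j = k j :=
      fun j hj => Function.update_of_ne hj _ _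
    have h2 : Function.update k l (k l + 1) l = k l + 1 := Function.update_self _ _ _
    have herase : (∏ j ∈ Finset.univ.erase l,
          gchoose (ρ j) (Function.update k l (k l + 1) j)
            * Bp (Function.update k l (k l + 1) j) (u j + t * v j))
        = ∏ j ∈ Finset.univ.erase l, gchoose (ρ j) (k j) * Bp (k j) (u j + t * v j) := by
      refine Finset.prod_congr rfl fun j hj => ?_
      rw [h1 j (Finset.ne_of_mem_erase hj)]
    have hρprod : (∏ j, gchoose (Function.update ρ l (ρ l - 1) j) (k j) * Bp (k j) (u j + t * v j))
        = gchoose (ρ l - 1) (k l) * Bp (k l) (u l + t * v l)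
          * ∏ j ∈ Finset.univ.erase l, gchoose (ρ j) (k j) * Bp (k j) (u j + t * v j) := by
      rw [← Finset.mul_prod_erase Finset.univ _ (Finset.mem_univ l)]
      congr 1
      · simp
      · exact Finset.prod_congr rfl fun j hj => by
          rw [Function.update_of_ne (Finset.ne_of_mem_erase hj)]
    rw [herase, h2, hρprod]
    have hg := gchoose_succ' (ρ l) (k l)
    have : ((k l + 1 : ℕ) : ℂ) = (k l : ℂ) + 1 := by push_cast; ring
    simp only [Nat.add_sub_cancel, smul_eq_mul, this]
    linear_combination (Bp (k l) (u l + t * v l) * v l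
      * ∏ j ∈ Finset.univ.erase l, gchoose (ρ j) (k j) * Bp (k j) (u j + t * v j)) * hg
  rw [← hval]
  exact hsum

lemma const_of_hasDerivAt_zero {f : ℂ → ℂ} (h : ∀ t, HasDerivAt f 0 t) (a b : ℂ) : f a = f b :=
  is_const_of_deriv_eq_zero (fun t => (h t).differentiableAt) (fun t => (h t).deriv) a b

lemma W_diag_const (M ν : ℕ) (ρ : Fin M → ℂ) (h : (∑ l, ρ l) = ν) (a b : ℂ) :
    W M (ν + 1) ρ (fun _ => a) = W M (ν + 1) ρ (fun _ => b) := by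
  have hc : ∀ t : ℂ, HasDerivAt (fun s => W M (ν + 1) ρ (fun _ => (0:ℂ) + s * 1)) 0 t := by
    intro t
    have hd := W_hasDerivAt M ν ρ (fun _ => 0) (fun _ => 1) t
    have hz : (∑ l, (1:ℂ) * ρ l
        * W M ν (Function.update ρ l (ρ l - 1)) (fun _ => (0:ℂ) + t * 1)) = 0 := by
      simp only [one_mul]
      rw [W1, h, sub_self, zero_mul]
    rwa [hz] at hd
  have := const_of_hasDerivAt_zero hc a b
  simpa using this

lemma pin (M ν : ℕ) (ρ : Fin M → ℂ) (h : (∑ l, ρ l) = (ν : ℂ) + 1) :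
    ∑ i, ρ i * W M (ν + 1) (Function.update ρ i 0) (fun j => if i < j then 1 else 0) = 0 := by
  set Hfun : ℕ → ℂ := fun l => W M (ν + 2) ρ (fun j => if l ≤ (j : ℕ) then 1 else 0) with hH
  have T1 : ∀ l : Fin M, Hfun (l : ℕ) - Hfun ((l : ℕ) + 1)
      = ρ l * W M (ν + 1) (Function.update ρ l 0) (fun j => if l < j then 1 else 0) := by
    intro l
    rw [hH]
    simp only [W]
    rw [← Finset.sum_sub_distrib]
    have hstep : ∀ k : Fin M → ℕ,
        ((∏ j, gchoose (ρ j) (k j) * Bp (k j) (if (l : ℕ) ≤ (j : ℕ) then 1 else 0))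
          - ∏ j, gchoose (ρ j) (k j) * Bp (k j) (if (l : ℕ) + 1 ≤ (j : ℕ) then 1 else 0))
        = gchoose (ρ l) (k l) * (if k l = 1 then 1 else 0)
          * ∏ j ∈ Finset.univ.erase l,
              gchoose (ρ j) (k j) * Bp (k j) (if (l : ℕ) ≤ (j : ℕ) then 1 else 0) := by
      intro k
      rw [← Finset.mul_prod_erase Finset.univ
        (fun j => gchoose (ρ j) (k j) * Bp (k j) (if (l : ℕ) ≤ (j : ℕ) then 1 else 0))
        (Finset.mem_univ l)]
      rw [← Finset.mul_prod_erase Finset.univ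
        (fun j => gchoose (ρ j) (k j) * Bp (k j) (if (l : ℕ) + 1 ≤ (j : ℕ) then 1 else 0))
        (Finset.mem_univ l)]
      have hpatch : (∏ j ∈ Finset.univ.erase l,
            gchoose (ρ j) (k j) * Bp (k j) (if (l : ℕ) + 1 ≤ (j : ℕ) then 1 else 0))
          = ∏ j ∈ Finset.univ.erase l,
            gchoose (ρ j) (k j) * Bp (k j) (if (l : ℕ) ≤ (j : ℕ) then 1 else 0) := by
        refine Finset.prod_congr rfl fun j hj => ?_
        have hjl : (j : ℕ) ≠ (l : ℕ) := fun hc =>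
          (Finset.ne_of_mem_erase hj) (Fin.ext hc)
        congr 2
        by_cases hle : (l : ℕ) + 1 ≤ (j : ℕ)
        · rw [if_pos hle, if_pos (by omega)]
        · rw [if_neg hle, if_neg (by omega)]
      rw [hpatch]
      have hB := Bp_one_sub_zero (k l)
      simp only [le_refl, if_pos]
      rw [if_neg (by omega : ¬ (l : ℕ) + 1 ≤ (l : ℕ))]
      linear_combination (gchoose (ρ l) (k l) * ∏ j ∈ Finset.univ.erase l,
        gchoose (ρ j) (k j) * Bp (k j) (if (l : ℕ) ≤ (j : ℕ) then 1 else 0)) * hB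
    rw [Finset.sum_congr rfl fun k _ => hstep k]
    have hvan : ∀ k : Fin M → ℕ, k l = 0 →
        gchoose (ρ l) (k l) * (if k l = 1 then 1 else 0)
          * ∏ j ∈ Finset.univ.erase l,
              gchoose (ρ j) (k j) * Bp (k j) (if (l : ℕ) ≤ (j : ℕ) then 1 else 0) = 0 := by
      intro k hk
      rw [hk]
      simp
    have h2 : (ν + 2) = (ν + 1) + 1 := rfl
    rw [h2, sum_adT_succ M (ν + 1) l _ hvan, Finset.mul_sum]
    refine Finset.sum_congr rfl fun k hk => ?_
    have h1 : ∀ j, j ≠ l → Function.update k l (k l + 1) j = k j :=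
      fun j hj => Function.update_of_ne hj _ _
    have h2' : Function.update k l (k l + 1) l = k l + 1 := Function.update_self _ _ _
    have herase : (∏ j ∈ Finset.univ.erase l,
          gchoose (ρ j) (Function.update k l (k l + 1) j)
            * Bp (Function.update k l (k l + 1) j) (if (l : ℕ) ≤ (j : ℕ) then 1 else 0))
        = ∏ j ∈ Finset.univ.erase l,
            gchoose (ρ j) (k j) * Bp (k j) (if (l : ℕ) ≤ (j : ℕ) then 1 else 0) := by
      refine Finset.prod_congr rfl fun j hj => ?_
      rw [h1 j (Finset.ne_of_mem_erase hj)]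
    rw [h2', herase]
    have hsplit : (∏ j, gchoose (Function.update ρ l 0 j) (k j)
          * Bp (k j) (if l < j then 1 else 0))
        = (gchoose 0 (k l) * Bp (k l) 0)
          * ∏ j ∈ Finset.univ.erase l,
              gchoose (ρ j) (k j) * Bp (k j) (if (l : ℕ) ≤ (j : ℕ) then 1 else 0) := by
      rw [← Finset.mul_prod_erase Finset.univ _ (Finset.mem_univ l)]
      congr 1
      · simp [lt_irrefl]
      · refine Finset.prod_congr rfl fun j hj => ?_
        have hjl : j ≠ l := Finset.ne_of_mem_erase hj
        rw [Function.update_of_ne hjl]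
        congr 2
        have hne : (j : ℕ) ≠ (l : ℕ) := fun hc => hjl (Fin.ext hc)
        by_cases hlt : l < j
        · rw [if_pos hlt, if_pos (le_of_lt (Fin.lt_iff_val_lt_val.1 hlt))]
        · rw [if_neg hlt, if_neg (fun hle => hlt (Fin.lt_iff_val_lt_val.2
            (lt_of_le_of_ne hle (Ne.symm hne))))]
    rw [hsplit]
    rcases Nat.eq_zero_or_pos (k l) with hk0 | hkpos
    · rw [hk0]
      simp [gchoose_one, Bp_zero, gchoose_zero]
    · obtain ⟨s, hs⟩ := Nat.exists_eq_add_of_lt hkpos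
      rw [hs]
      simp only [Nat.zero_add]
      rw [if_neg (by omega : ¬ s + 1 + 1 = 1), gchoose_zero_left_succ]
      ring
  calc ∑ i, ρ i * W M (ν + 1) (Function.update ρ i 0) (fun j => if i < j then 1 else 0)
      = ∑ i : Fin M, (Hfun (i : ℕ) - Hfun ((i : ℕ) + 1)) :=
        (Finset.sum_congr rfl fun i _ => (T1 i).symm)
    _ = ∑ i ∈ Finset.range M, (Hfun i - Hfun (i + 1)) :=
        Fin.sum_univ_eq_sum_range (fun i => Hfun i - Hfun (i + 1)) M
    _ = Hfun 0 - Hfun M := Finset.sum_range_sub' Hfun M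
    _ = 0 := by
        rw [hH]
        simp only
        have e0 : (fun j : Fin M => if (0 : ℕ) ≤ (j : ℕ) then (1:ℂ) else 0) = fun _ => 1 := by
          funext j; simp
        have eM : (fun j : Fin M => if (M : ℕ) ≤ (j : ℕ) then (1:ℂ) else 0) = fun _ => 0 := by
          funext j; rw [if_neg (Nat.not_le.2 j.isLt)]
        rw [e0, eM]
        have hd := W_diag_const M (ν + 1) ρ (by push_cast; exact h) (1 : ℂ) (0 : ℂ)
        rw [show ν + 2 = (ν + 1) + 1 from rfl, hd, sub_self]

theorem Kmain : ∀ (ν M : ℕ) (ρ y : Fin M → ℂ), (∑ j, ρ j) = (ν : ℂ) →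
    ∑ i, ρ i * W M ν (Function.update ρ i 0)
      (fun j => y j - y i + if i < j then 1 else 0) = 0 := by
  intro ν
  induction ν with
  | zero =>
    intro M ρ y h
    simp only [W_zero, mul_one]
    simpa using h
  | succ ν IH =>
    intro M ρ y h
    have hcast : (∑ j, ρ j) = (ν : ℂ) + 1 := by push_cast at h; exact h
    -- the function along the segment
    set f : ℂ → ℂ := fun s => ∑ i, ρ i * W M (ν + 1) (Function.update ρ i 0)
      (fun j => (y j - y i + if i < j then (1:ℂ) else 0) + s * (y i - y j)) with hf
    have hD : ∀ t : ℂ, HasDerivAt f 0 t := by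
      intro t
      have hd : HasDerivAt f (∑ i, ρ i * (∑ l, (y i - y l) * (Function.update ρ i 0 l)
          * W M ν (Function.update (Function.update ρ i 0) l ((Function.update ρ i 0 l) - 1))
            (fun j => (y j - y i + if i < j then (1:ℂ) else 0) + t * (y i - y j)))) t := by
        rw [hf]
        exact HasDerivAt.fun_sum fun i _ =>
          ((W_hasDerivAt M ν (Function.update ρ i 0)
            (fun j => y j - y i + if i < j then (1:ℂ) else 0)
            (fun j => y i - y j) t).const_mul (ρ i))
      have hzero : (∑ i, ρ i * (∑ l, (y i - y l) * (Function.update ρ i 0 l)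
          * W M ν (Function.update (Function.update ρ i 0) l ((Function.update ρ i 0 l) - 1))
            (fun j => (y j - y i + if i < j then (1:ℂ) else 0) + t * (y i - y j)))) = 0 := by
        have harg : ∀ i : Fin M,
            (fun j => (y j - y i + if i < j then (1:ℂ) else 0) + t * (y i - y j))
            = (fun j => (1 - t) * y j - (1 - t) * y i + if i < j then (1:ℂ) else 0) := by
          intro i; funext j; ring
        simp only [harg]
        set w : Fin M → ℂ := fun j => (1 - t) * y j with hw
        have hwj : ∀ i : Fin M,
            (fun j => (1 - t) * y j - (1 - t) * y i + if i < j then (1:ℂ) else 0)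
            = fun j => w j - w i + if i < j then (1:ℂ) else 0 := by
          intro i; funext j; rw [hw]
        simp only [hwj]
        -- diff-sum split
        have hdiffsum : ∀ i : Fin M, (∑ x ∈ Finset.univ \ {i}, ρ x) = ((ν : ℂ) + 1) - ρ i := by
          intro i
          have hs := Finset.sum_eq_sum_sdiff_singleton_add (Finset.mem_univ i) ρ
          rw [hcast] at hs
          linear_combination -hs
        have hσsum : ∀ i : Fin M, (∑ l, Function.update ρ i 0 l) = ((ν : ℂ) + 1) - ρ i := by
          intro i
          rw [Finset.sum_update_of_mem (Finset.mem_univ i), hdiffsum i, zero_add]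
        -- first reduction : W1 per i
        have hW1 : ∀ i : Fin M,
            (∑ l, Function.update ρ i 0 l
              * W M ν (Function.update (Function.update ρ i 0) l ((Function.update ρ i 0 l) - 1))
                (fun j => w j - w i + if i < j then (1:ℂ) else 0))
            = (1 - ρ i) * W M ν (Function.update ρ i 0)
                (fun j => w j - w i + if i < j then (1:ℂ) else 0) := by
          intro i
          rw [W1 M ν (Function.update ρ i 0) (fun j => w j - w i + if i < j then (1:ℂ) else 0)]
          rw [hσsum i]
          ring
        -- inner sum over i for fixed l
        have hinner : ∀ l : Fin M,
            (∑ i, ρ i * (Function.update ρ i 0 l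
              * W M ν (Function.update (Function.update ρ i 0) l ((Function.update ρ i 0 l) - 1))
                (fun j => w j - w i + if i < j then (1:ℂ) else 0)))
            = - (ρ l * (ρ l - 1) * W M ν (Function.update ρ l 0)
                (fun j => w j - w l + if l < j then (1:ℂ) else 0)) := by
          intro l
          have hsum' : (∑ j, Function.update ρ l (ρ l - 1) j) = (ν : ℂ) := by
            rw [Finset.sum_update_of_mem (Finset.mem_univ l), hdiffsum l]
            ring
          have hIH := IH M (Function.update ρ l (ρ l - 1)) w hsum'
          -- split IH at i = l
          rw [Finset.sum_eq_sum_sdiff_singleton_add (Finset.mem_univ l)] at hIH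
          have hIHl : Function.update ρ l (ρ l - 1) l = ρ l - 1 := Function.update_self _ _ _
          have hIHup : Function.update (Function.update ρ l (ρ l - 1)) l 0
              = Function.update ρ l 0 := by simp
          rw [hIHl, hIHup] at hIH
          have hIHdiff : (∑ i ∈ Finset.univ \ {l}, Function.update ρ l (ρ l - 1) i
                * W M ν (Function.update (Function.update ρ l (ρ l - 1)) i 0)
                  (fun j => w j - w i + if i < j then (1:ℂ) else 0))
              = ∑ i ∈ Finset.univ \ {l}, ρ i
                * W M ν (Function.update (Function.update ρ i 0) l ((Function.update ρ i 0 l) - 1))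
                  (fun j => w j - w i + if i < j then (1:ℂ) else 0) := by
            refine Finset.sum_congr rfl fun i hi => ?_
            have hil : i ≠ l := by
              intro hc; subst hc; simp at hi
            rw [Function.update_of_ne hil]
            congr 2
            rw [Function.update_comm (Ne.symm hil), Function.update_of_ne (Ne.symm hil)]
          rw [hIHdiff] at hIH
          -- now the goal sum: split at i = l
          rw [Finset.sum_eq_sum_sdiff_singleton_add (Finset.mem_univ l)]
          have hgl : ρ l * (Function.update ρ l 0 l
              * W M ν (Function.update (Function.update ρ l 0) l ((Function.update ρ l 0 l) - 1))
                (fun j => w j - w l + if l < j then (1:ℂ) else 0)) = 0 := by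
            rw [Function.update_self]
            ring
          rw [hgl, add_zero]
          have hgdiff : (∑ i ∈ Finset.univ \ {l}, ρ i * (Function.update ρ i 0 l
                * W M ν (Function.update (Function.update ρ i 0) l ((Function.update ρ i 0 l) - 1))
                  (fun j => w j - w i + if i < j then (1:ℂ) else 0)))
              = ∑ i ∈ Finset.univ \ {l}, ρ l * (ρ i
                * W M ν (Function.update (Function.update ρ i 0) l ((Function.update ρ i 0 l) - 1))
                  (fun j => w j - w i + if i < j then (1:ℂ) else 0)) := by
            refine Finset.sum_congr rfl fun i hi => ?_
            have hil : i ≠ l := by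
              intro hc; subst hc; simp at hi
            rw [Function.update_of_ne (fun hc => hil hc.symm) _ ρ]
            ring
          rw [hgdiff, ← Finset.mul_sum]
          -- from hIH : ∑diff + (ρ l − 1) * W(σ_l) = 0
          have : (∑ i ∈ Finset.univ \ {l}, ρ i
              * W M ν (Function.update (Function.update ρ i 0) l ((Function.update ρ i 0 l) - 1))
                (fun j => w j - w i + if i < j then (1:ℂ) else 0))
              = - ((ρ l - 1) * W M ν (Function.update ρ l 0)
                (fun j => w j - w l + if l < j then (1:ℂ) else 0)) := by
            linear_combination hIH
          rw [this]
          ring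
        -- now assemble
        have hsplit : ∀ i : Fin M, ρ i * (∑ l, (y i - y l) * (Function.update ρ i 0 l)
            * W M ν (Function.update (Function.update ρ i 0) l ((Function.update ρ i 0 l) - 1))
              (fun j => w j - w i + if i < j then (1:ℂ) else 0))
            = ρ i * y i * (∑ l, Function.update ρ i 0 l
                * W M ν (Function.update (Function.update ρ i 0) l ((Function.update ρ i 0 l) - 1))
                  (fun j => w j - w i + if i < j then (1:ℂ) else 0))
              - (∑ l, y l * (ρ i * (Function.update ρ i 0 l
                * W M ν (Function.update (Function.update ρ i 0) l ((Function.update ρ i 0 l) - 1))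
                  (fun j => w j - w i + if i < j then (1:ℂ) else 0)))) := by
          intro i
          rw [Finset.mul_sum, Finset.mul_sum, ← Finset.sum_sub_distrib]
          exact Finset.sum_congr rfl fun l _ => by ring
        rw [Finset.sum_congr rfl fun i _ => hsplit i]
        rw [Finset.sum_sub_distrib]
        have hS1 : (∑ i, ρ i * y i * (∑ l, Function.update ρ i 0 l
            * W M ν (Function.update (Function.update ρ i 0) l ((Function.update ρ i 0 l) - 1))
              (fun j => w j - w i + if i < j then (1:ℂ) else 0)))
            = ∑ i, ρ i * y i * ((1 - ρ i) * W M ν (Function.update ρ i 0)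
              (fun j => w j - w i + if i < j then (1:ℂ) else 0)) := by
          exact Finset.sum_congr rfl fun i _ => by rw [hW1 i]
        have hS2 : (∑ i, ∑ l, y l * (ρ i * (Function.update ρ i 0 l
            * W M ν (Function.update (Function.update ρ i 0) l ((Function.update ρ i 0 l) - 1))
              (fun j => w j - w i + if i < j then (1:ℂ) else 0))))
            = ∑ l, y l * - (ρ l * (ρ l - 1) * W M ν (Function.update ρ l 0)
              (fun j => w j - w l + if l < j then (1:ℂ) else 0)) := by
          rw [Finset.sum_comm]
          refine Finset.sum_congr rfl fun l _ => ?_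
          rw [← Finset.mul_sum, hinner l]
        rw [hS1, hS2, ← Finset.sum_sub_distrib]
        refine Finset.sum_eq_zero fun i _ => ?_
        ring
      rwa [hzero] at hd
    have hconst := const_of_hasDerivAt_zero hD 0 1
    have hf0 : f 0 = ∑ i, ρ i * W M (ν + 1) (Function.update ρ i 0)
        (fun j => y j - y i + if i < j then (1:ℂ) else 0) := by
      rw [hf]
      refine Finset.sum_congr rfl fun i _ => ?_
      have harg0 : (fun j => (y j - y i + if i < j then (1:ℂ) else 0) + 0 * (y i - y j))
          = fun j => y j - y i + if i < j then (1:ℂ) else 0 := by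
        funext j; ring
      rw [harg0]
    have hf1 : f 1 = ∑ i, ρ i * W M (ν + 1) (Function.update ρ i 0)
        (fun j => if i < j then (1:ℂ) else 0) := by
      rw [hf]
      refine Finset.sum_congr rfl fun i _ => ?_
      have harg1 : (fun j => (y j - y i + if i < j then (1:ℂ) else 0) + 1 * (y i - y j))
          = fun j => if i < j then (1:ℂ) else 0 := by
        funext j; ring
      rw [harg1]
    have hpin := pin M ν ρ hcast
    calc ∑ i, ρ i * W M (ν + 1) (Function.update ρ i 0)
          (fun j => y j - y i + if i < j then (1:ℂ) else 0)
        = f 0 := hf0.symm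
      _ = f 1 := hconst
      _ = 0 := by rw [hf1]; exact hpin

lemma conv0 (m n : ℕ) (c : ℂ) (r x : Fin m → ℂ) :
    W (m + 1) n (Function.update (Fin.cons c r : Fin (m+1) → ℂ) 0 0)
      (fun j => (Fin.cons (1:ℂ) x : Fin (m+1) → ℂ) j - (Fin.cons (1:ℂ) x : Fin (m+1) → ℂ) 0 + if (0 : Fin (m+1)) < j then 1 else 0)
    = ∑ k ∈ Finset.Nat.antidiagonalTuple m n, ∏ j, gchoose (r j) (k j) * Bp (k j) (x j) := by
  unfold W
  rw [← Finset.sum_filter_of_ne (p := fun k : Fin (m+1) → ℕ => k 0 = 0) ?hvan]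
  case hvan =>
    intro k _ hne
    by_contra h0
    apply hne
    refine Finset.prod_eq_zero (Finset.mem_univ 0) ?_
    obtain ⟨s, hs⟩ := Nat.exists_eq_succ_of_ne_zero h0
    rw [hs, Function.update_self, gchoose_zero_left_succ, zero_mul]
  refine Finset.sum_nbij' (i := fun k' => Fin.tail k') (j := fun k => Fin.cons 0 k)
    ?_ ?_ ?_ ?_ ?_
  · intro k' hk'
    rw [Finset.mem_filter, Finset.Nat.mem_antidiagonalTuple] at hk'
    rw [Finset.Nat.mem_antidiagonalTuple]
    obtain ⟨hsum, h0⟩ := hk'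
    rw [Fin.sum_univ_succ, h0, zero_add] at hsum
    exact hsum
  · intro k hk
    rw [Finset.Nat.mem_antidiagonalTuple] at hk
    rw [Finset.mem_filter, Finset.Nat.mem_antidiagonalTuple]
    refine ⟨?_, rfl⟩
    rw [Fin.sum_univ_succ]
    simpa [Fin.tail] using hk
  · intro k' hk'
    rw [Finset.mem_filter] at hk'
    funext s
    beta_reduce
    refine Fin.cases ?_ ?_ s
    · rw [Fin.cons_zero, hk'.2]
    · intro jj; rw [Fin.cons_succ]; rfl
  · intro k _
    funext jj
    simp [Fin.tail]
  · intro k' hk'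
    rw [Finset.mem_filter] at hk'
    beta_reduce
    rw [Fin.prod_univ_succ]
    have h0fac : gchoose (Function.update (Fin.cons c r : Fin (m+1) → ℂ) 0 0 0) (k' 0)
        * Bp (k' 0) ((Fin.cons (1:ℂ) x : Fin (m+1) → ℂ) 0 - (Fin.cons (1:ℂ) x : Fin (m+1) → ℂ) 0
          + if (0 : Fin (m+1)) < 0 then 1 else 0) = 1 := by
      rw [hk'.2, Function.update_self, gchoose_zero, Bp_zero, one_mul]
    rw [h0fac, one_mul]
    refine Finset.prod_congr rfl fun j _ => ?_
    beta_reduce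
    simp only [Fin.tail]
    rw [Function.update_of_ne (Fin.succ_ne_zero j), Fin.cons_succ, Fin.cons_succ, Fin.cons_zero]
    rw [if_pos (Fin.succ_pos j)]
    have : (x j - 1 + 1 : ℂ) = x j := by ring
    rw [this]

lemma conv1 (m n : ℕ) (c : ℂ) (r x : Fin m → ℂ) (i : Fin m) :
    W (m + 1) n (Function.update (Fin.cons c r : Fin (m+1) → ℂ) i.succ 0)
      (fun j => (Fin.cons (1:ℂ) x : Fin (m+1) → ℂ) j - (Fin.cons (1:ℂ) x : Fin (m+1) → ℂ) i.succ + if i.succ < j then 1 else 0)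
    = ∑ k ∈ Finset.Nat.antidiagonalTuple m n,
        gchoose c (k i) * Bp (k i) (1 - x i) *
          ∏ j ∈ Finset.univ.erase i,
            gchoose (r j) (k j) * Bp (k j) (x j - x i + if i < j then 1 else 0) := by
  unfold W
  rw [← Finset.sum_filter_of_ne (p := fun k : Fin (m+1) → ℕ => k i.succ = 0) ?hvan]
  case hvan =>
    intro k _ hne
    by_contra h0
    apply hne
    refine Finset.prod_eq_zero (Finset.mem_univ i.succ) ?_
    obtain ⟨s, hs⟩ := Nat.exists_eq_succ_of_ne_zero h0
    rw [hs, Function.update_self, gchoose_zero_left_succ, zero_mul]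
  symm
  refine Finset.sum_nbij' (i := fun k => (Fin.cons (k i) (Function.update k i 0) : Fin (m+1) → ℕ))
    (j := fun k' => fun j => if j = i then k' 0 else k' j.succ) ?_ ?_ ?_ ?_ ?_
  · intro k hk
    rw [Finset.Nat.mem_antidiagonalTuple] at hk
    rw [Finset.mem_filter, Finset.Nat.mem_antidiagonalTuple]
    beta_reduce
    constructor
    · rw [Fin.sum_univ_succ, Fin.cons_zero]
      have : ∀ j : Fin m, (Fin.cons (k i) (Function.update k i 0) : Fin (m+1) → ℕ) j.succ
          = Function.update k i 0 j := fun j => Fin.cons_succ _ _ _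
      rw [Finset.sum_congr rfl fun j _ => this j]
      rw [Finset.sum_update_of_mem (Finset.mem_univ i), zero_add]
      have hd := Finset.sum_eq_sum_sdiff_singleton_add (Finset.mem_univ i) k
      omega
    · rw [Fin.cons_succ, Function.update_self]
  · intro k' hk'
    rw [Finset.mem_filter, Finset.Nat.mem_antidiagonalTuple] at hk'
    rw [Finset.Nat.mem_antidiagonalTuple]
    beta_reduce
    obtain ⟨hsum, h0⟩ := hk'
    rw [Fin.sum_univ_succ] at hsum
    have hsplit : (∑ j : Fin m, if j = i then k' 0 else k' j.succ)
        = k' 0 + ∑ j ∈ Finset.univ \ {i}, k' j.succ := by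
      rw [Finset.sum_eq_sum_sdiff_singleton_add (Finset.mem_univ i)]
      rw [if_pos rfl]
      rw [Finset.sum_congr rfl fun j hj => if_neg (by
        rw [Finset.mem_sdiff, Finset.mem_singleton] at hj; exact hj.2)]
      omega
    rw [hsplit]
    have hsplit2 : (∑ j : Fin m, k' j.succ)
        = ∑ j ∈ Finset.univ \ {i}, k' j.succ + k' i.succ :=
      Finset.sum_eq_sum_sdiff_singleton_add (Finset.mem_univ i) _
    omega
  · intro k hk
    funext jj
    beta_reduce
    by_cases hji : jj = i
    · subst hji; rw [if_pos rfl, Fin.cons_zero]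
    · rw [if_neg hji, Fin.cons_succ, Function.update_of_ne hji]
  · intro k' hk'
    rw [Finset.mem_filter] at hk'
    funext s
    beta_reduce
    refine Fin.cases ?_ ?_ s
    · rw [Fin.cons_zero, if_pos rfl]
    · intro jj
      rw [Fin.cons_succ]
      by_cases hji : jj = i
      · subst hji; rw [Function.update_self, hk'.2]
      · rw [Function.update_of_ne hji, if_neg hji]
  · intro k hk
    beta_reduce
    rw [Fin.prod_univ_succ]
    have h0fac : gchoose (Function.update (Fin.cons c r : Fin (m+1) → ℂ) i.succ 0 0)
        ((Fin.cons (k i) (Function.update k i 0) : Fin (m+1) → ℕ) 0)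
        * Bp ((Fin.cons (k i) (Function.update k i 0) : Fin (m+1) → ℕ) 0)
          ((Fin.cons (1:ℂ) x : Fin (m+1) → ℂ) 0 - (Fin.cons (1:ℂ) x : Fin (m+1) → ℂ) i.succ + if i.succ < 0 then 1 else 0)
        = gchoose c (k i) * Bp (k i) (1 - x i) := by
      rw [Function.update_of_ne (Fin.succ_ne_zero i).symm, Fin.cons_zero, Fin.cons_zero,
        Fin.cons_zero, Fin.cons_succ, if_neg (Fin.not_lt_zero _ : ¬ i.succ < 0)]
      rw [add_zero]
    rw [h0fac]
    congr 1
    have hfac : ∀ j : Fin m,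
        gchoose (Function.update (Fin.cons c r : Fin (m+1) → ℂ) i.succ 0 j.succ)
          ((Fin.cons (k i) (Function.update k i 0) : Fin (m+1) → ℕ) j.succ)
          * Bp ((Fin.cons (k i) (Function.update k i 0) : Fin (m+1) → ℕ) j.succ)
            ((Fin.cons (1:ℂ) x : Fin (m+1) → ℂ) j.succ - (Fin.cons (1:ℂ) x : Fin (m+1) → ℂ) i.succ + if i.succ < j.succ then 1 else 0)
        = if j = i then 1
          else gchoose (r j) (k j) * Bp (k j) (x j - x i + if i < j then 1 else 0) := by
      intro j
      rw [Fin.cons_succ, Fin.cons_succ, Fin.cons_succ]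
      by_cases hji : j = i
      · subst hji
        rw [if_pos rfl, Function.update_self, Function.update_self]
        rw [gchoose_zero, Bp_zero, one_mul]
      · rw [if_neg hji, Function.update_of_ne (fun hc => hji (Fin.succ_injective _ hc)),
          Fin.cons_succ, Function.update_of_ne hji]
        congr 2
        by_cases hlt : i < j
        · rw [if_pos ((Fin.succ_lt_succ_iff).2 hlt), if_pos hlt]
        · rw [if_neg (fun hc => hlt ((Fin.succ_lt_succ_iff).1 hc)), if_neg hlt]
    rw [Finset.prod_congr rfl fun j _ => hfac j]
    symm
    rw [← Finset.prod_erase (f := fun j => if j = i then (1:ℂ)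
        else gchoose (r j) (k j) * Bp (k j) (x j - x i + if i < j then 1 else 0))
      Finset.univ (if_pos rfl)]
    refine Finset.prod_congr rfl fun j hj => ?_
    rw [if_neg (Finset.ne_of_mem_erase hj)]

/-- Main theorem: symmetric identity for products of `m` Bernoulli polynomials,
with `r_{m+1} = n - r_1 - ⋯ - r_m`. -/
theorem symmetric_bernoulli (m n : ℕ) (hm : 0 < m) (hn : 0 < n)
    (r x : Fin m → ℂ) :
    ((n : ℂ) - ∑ j, r j) *
      ∑ k ∈ Finset.Nat.antidiagonalTuple m n, ∏ j, gchoose (r j) (k j) * Bp (k j) (x j) =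
    - ∑ i, r i *
      ∑ k ∈ Finset.Nat.antidiagonalTuple m n,
        gchoose ((n : ℂ) - ∑ j, r j) (k i) * Bp (k i) (1 - x i) *
          ∏ j ∈ Finset.univ.erase i,
            gchoose (r j) (k j) * Bp (k j) (x j - x i + if i < j then 1 else 0) := by
  set c : ℂ := (n : ℂ) - ∑ j, r j with hc
  have hsum : (∑ j, (Fin.cons c r : Fin (m+1) → ℂ) j) = (n : ℂ) := by
    rw [Fin.sum_cons, hc]; ring
  have hK := Kmain n (m+1) (Fin.cons c r : Fin (m+1) → ℂ) (Fin.cons (1:ℂ) x : Fin (m+1) → ℂ) hsum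
  rw [Fin.sum_univ_succ] at hK
  have hre : (∑ i : Fin m, (Fin.cons c r : Fin (m+1) → ℂ) i.succ
        * W (m+1) n (Function.update (Fin.cons c r : Fin (m+1) → ℂ) i.succ 0)
          (fun j => (Fin.cons (1:ℂ) x : Fin (m+1) → ℂ) j
            - (Fin.cons (1:ℂ) x : Fin (m+1) → ℂ) i.succ + if i.succ < j then 1 else 0))
      = ∑ i, r i * (∑ k ∈ Finset.Nat.antidiagonalTuple m n,
          gchoose c (k i) * Bp (k i) (1 - x i) *
            ∏ j ∈ Finset.univ.erase i,
              gchoose (r j) (k j) * Bp (k j) (x j - x i + if i < j then 1 else 0)) := by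
    refine Finset.sum_congr rfl fun i _ => ?_
    rw [Fin.cons_succ, conv1 m n c r x i]
  rw [hre, Fin.cons_zero, conv0 m n c r x] at hK
  linear_combination hK
end

section
/- As an identity of formal power series (or of analytic functions near 0) in variables t_1,…,t_m: (t_1+⋯+t_m) ∏_{j=1}^m (t_j e^{x_j t_j}/(e^{t_j}−1)) = ∑_{i=1}^m [t_i (t_1+⋯+t_m) e^{x_i(t_1+⋯+t_m)}/(e^{t_1+⋯+t_m}−1)] ∏_{j≠i} (t_j e^{(x_j − x_i + 1_{j>i}) t_j}/(e^{t_j}−1)), where 1_{j>i} = 1 if j>i and 0 otherwise. -/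
open Finset

lemma telescope_exp : ∀ (m : ℕ) (t : Fin m → ℂ),
    ∑ i, (Complex.exp (t i) - 1) * Complex.exp (∑ j ∈ Finset.Ioi i, t j)
      = Complex.exp (∑ j, t j) - 1 := by
  intro m
  induction m with
  | zero => intro t; simp
  | succ n ih =>
    intro t
    rw [Fin.sum_univ_succ, Fin.sum_univ_succ]
    have hs : ∀ i : Fin n, ∑ j ∈ Finset.Ioi i.succ, t j = ∑ j ∈ Finset.Ioi i, t j.succ := by
      intro i; rw [Fin.sum_Ioi_succ]
    simp only [hs]
    rw [ih (fun j => t j.succ), Fin.sum_Ioi_zero, Complex.exp_add]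
    ring

lemma indsum (m : ℕ) (t : Fin m → ℂ) (i : Fin m) :
    ∑ j ∈ Finset.univ.erase i, (if i < j then (1:ℂ) else 0) * t j
      = ∑ j ∈ Finset.Ioi i, t j := by
  simp only [ite_mul, one_mul, zero_mul]
  rw [← Finset.sum_filter]
  congr 1
  ext j
  simp only [Finset.mem_filter, Finset.mem_erase, Finset.mem_Ioi, Finset.mem_univ,
    true_and, and_true]
  exact ⟨fun h => h.2, fun h => ⟨h.ne', h⟩⟩

/-- The generating-function identity (2.1), stated for complex numbers `t_1,…,t_m`
at which all denominators are nonzero (equivalently, an identity of analytic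
functions near `0`). -/
theorem generating_identity (m : ℕ) (x t : Fin m → ℂ)
    (h : ∀ j, Complex.exp (t j) ≠ 1) (hsum : Complex.exp (∑ j, t j) ≠ 1) :
    (∑ j, t j) * ∏ j, t j * Complex.exp (x j * t j) / (Complex.exp (t j) - 1) =
    ∑ i, t i * (∑ j, t j) * Complex.exp (x i * ∑ j, t j) /
        (Complex.exp (∑ j, t j) - 1) *
      ∏ j ∈ Finset.univ.erase i,
        t j * Complex.exp ((x j - x i + if i < j then 1 else 0) * t j) /
          (Complex.exp (t j) - 1) := by
  have hE : Complex.exp (∑ j, t j) - 1 ≠ 0 := sub_ne_zero.mpr hsum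
  have key : ∀ i : Fin m,
      t i * (∑ j, t j) * Complex.exp (x i * ∑ j, t j) /
          (Complex.exp (∑ j, t j) - 1) *
        ∏ j ∈ Finset.univ.erase i,
          t j * Complex.exp ((x j - x i + if i < j then 1 else 0) * t j) /
            (Complex.exp (t j) - 1)
      = ((∏ j, t j * Complex.exp (x j * t j) / (Complex.exp (t j) - 1)) * (∑ j, t j) /
          (Complex.exp (∑ j, t j) - 1)) *
        ((Complex.exp (t i) - 1) * Complex.exp (∑ j ∈ Finset.Ioi i, t j)) := by
    intro i
    have hd : Complex.exp (t i) - 1 ≠ 0 := sub_ne_zero.mpr (h i)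
    have hD : ∏ j ∈ Finset.univ.erase i, (Complex.exp (t j) - 1) ≠ 0 :=
      Finset.prod_ne_zero_iff.mpr fun j _ => sub_ne_zero.mpr (h j)
    rw [← Finset.mul_prod_erase Finset.univ _ (Finset.mem_univ i)]
    simp only [Finset.prod_div_distrib, Finset.prod_mul_distrib, ← Complex.exp_sum]
    have hexp : x i * (∑ j, t j)
        + ∑ j ∈ Finset.univ.erase i, (x j - x i + if i < j then 1 else 0) * t j
        = (x i * t i + ∑ j ∈ Finset.univ.erase i, x j * t j)
          + ∑ j ∈ Finset.Ioi i, t j := by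
      have h1 : ∑ j ∈ Finset.univ.erase i, (x j - x i + if i < j then 1 else 0) * t j
          = ∑ j ∈ Finset.univ.erase i, (x j * t j - x i * t j)
            + ∑ j ∈ Finset.univ.erase i, (if i < j then (1:ℂ) else 0) * t j := by
        rw [← Finset.sum_add_distrib]
        exact Finset.sum_congr rfl fun j _ => by ring
      rw [h1, indsum, Finset.sum_sub_distrib, ← Finset.mul_sum]
      have h2 : (∑ j, t j) = t i + ∑ j ∈ Finset.univ.erase i, t j :=
        (Finset.add_sum_erase Finset.univ t (Finset.mem_univ i)).symm
      rw [h2]; ring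
    have hkey : Complex.exp (x i * ∑ j : Fin m, t j) *
        Complex.exp (∑ j ∈ Finset.univ.erase i,
          (x j - x i + if i < j then 1 else 0) * t j)
        = Complex.exp (x i * t i) *
          Complex.exp (∑ j ∈ Finset.univ.erase i, x j * t j) *
          Complex.exp (∑ j ∈ Finset.Ioi i, t j) := by
      rw [← Complex.exp_add, ← Complex.exp_add, ← Complex.exp_add, hexp]
    set A := Complex.exp (x i * ∑ j : Fin m, t j)
    set B := Complex.exp (∑ j ∈ Finset.univ.erase i,
      (x j - x i + if i < j then 1 else 0) * t j)
    set C := Complex.exp (x i * t i)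
    set F := Complex.exp (∑ j ∈ Finset.univ.erase i, x j * t j)
    set I := Complex.exp (∑ j ∈ Finset.Ioi i, t j)
    set E := Complex.exp (∑ j : Fin m, t j) - 1
    set d := Complex.exp (t i) - 1
    set D := ∏ j ∈ Finset.univ.erase i, (Complex.exp (t j) - 1)
    field_simp
    linear_combination (t i * (∑ j : Fin m, t j) * (∏ j ∈ Finset.univ.erase i, t j)) * hkey
  rw [Finset.sum_congr rfl (fun i _ => key i), ← Finset.mul_sum, telescope_exp m t,
    div_mul_cancel₀ _ hE, mul_comm]
end

section
/- Let r_1,…,r_m be complex numbers, n ≥ 1, and fix an index i and nonnegative integers l_j for j ≠ i with ∑_{j≠i} l_j ≤ n. Then ∑_{k_1+⋯+k_m = n+1, k_j ≥ 0} C(r_i − 1, k_i − 1) ∏_{j≠i} C(r_j − l_j, k_j − l_j) = (−1)^{l_i} C(n − r_1 − ⋯ − r_m, l_i), where l_i := n − ∑_{j≠i} l_j, C denotes the generalized binomial coefficient, and C(r,k) = 0 for k < 0. -/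
lemma gchoose_eq_ring_choose (r : ℂ) (k : ℕ) : gchoose r k = Ring.choose r k := by
  have h : (descPochhammer ℤ k).smeval r = ∏ i ∈ Finset.range k, (r - i) := by
    induction k with
    | zero => simp [descPochhammer_zero, Polynomial.smeval_one]
    | succ n ih =>
      rw [descPochhammer_succ_right, Polynomial.smeval_mul, ih, Finset.prod_range_succ]
      congr 1
      simp [Polynomial.smeval_sub, Polynomial.smeval_X, Polynomial.smeval_natCast]
  have h2 := Ring.descPochhammer_eq_factorial_smul_choose r k
  rw [h] at h2
  rw [gchoose, h2, nsmul_eq_mul]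
  field_simp [Nat.factorial_ne_zero]

lemma gchoose_vandermonde (u v : ℂ) (N : ℕ) :
    ∑ ab ∈ Finset.HasAntidiagonal.antidiagonal N, gchoose u ab.1 * gchoose v ab.2 = gchoose (u + v) N := by
  simp only [gchoose_eq_ring_choose]
  exact (Ring.add_choose_eq N (Commute.all u v)).symm

lemma gchoose_zero_pos (N : ℕ) (hN : 0 < N) : gchoose 0 N = 0 := by
  rw [gchoose, Finset.prod_eq_zero (Finset.mem_range.mpr hN : 0 ∈ Finset.range N)]
  · simp
  · simp

lemma gchoose_multi_vandermonde {ι : Type*} [DecidableEq ι] (s : Finset ι) (f : ι → ℂ) (N : ℕ) :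
    ∑ k ∈ s.piAntidiag N, ∏ j ∈ s, gchoose (f j) (k j) =
      gchoose (∑ j ∈ s, f j) N := by
  induction s using Finset.cons_induction generalizing N with
  | empty =>
    rcases Nat.eq_zero_or_pos N with h | h
    · subst h; simp [gchoose]
    · rw [Finset.piAntidiag_empty_of_ne_zero h.ne', Finset.sum_empty, Finset.sum_empty,
        gchoose_zero_pos N h]
  | cons i s hi ih =>
    rw [Finset.piAntidiag_cons hi, Finset.sum_disjiUnion, Finset.sum_cons,
      ← gchoose_vandermonde (f i) (∑ j ∈ s, f j) N]
    refine Finset.sum_congr rfl fun p hp => ?_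
    rw [Finset.sum_map, ← ih p.2, Finset.mul_sum]
    refine Finset.sum_congr rfl fun g hg => ?_
    have hgi : g i = 0 := by
      by_contra h
      exact hi ((Finset.mem_piAntidiag.mp hg).2 i h)
    rw [Finset.prod_cons]
    congr 1
    · simp [addRightEmbedding, hgi]
    · refine Finset.prod_congr rfl fun j hj => ?_
      have : j ≠ i := fun h => hi (h ▸ hj)
      simp [addRightEmbedding, this]

lemma gchoose_reflect (x : ℂ) (L : ℕ) :
    gchoose (x - 1 + L) L = (-1) ^ L * gchoose (-x) L := by
  have key : ∀ L : ℕ, ∀ x : ℂ, ∏ i ∈ Finset.range L, (x - 1 + L - i) =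
      (-1) ^ L * ∏ i ∈ Finset.range L, (-x - i) := by
    intro L
    induction L with
    | zero => simp
    | succ L ih =>
      intro x
      rw [Finset.prod_range_succ]
      have h1 : ∀ i ∈ Finset.range L, (x - 1 + (L+1:ℕ) - (i:ℕ)) = ((x+1) - 1 + L - i) := by
        intro i _; push_cast; ring
      rw [Finset.prod_congr rfl h1, ih (x + 1)]
      have h2 : ∏ i ∈ Finset.range (L+1), (-x - i) =
          (∏ i ∈ Finset.range L, (-x - (i+1:ℕ))) * (-x - (0:ℕ)) := by
        rw [Finset.prod_range_succ']
      rw [h2]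
      have h3 : ∀ i ∈ Finset.range L, (-(x+1) - (i:ℕ)) = (-x - (i+1:ℕ)) := by
        intro i _; push_cast; ring
      rw [Finset.prod_congr rfl h3]
      have : (x - 1 + (L+1:ℕ) - (L:ℕ)) = x := by push_cast; ring
      rw [this]
      push_cast
      ring
  rw [gchoose, gchoose, key L x, mul_div_assoc]

/-- The Chu–Vandermonde computation in the proof of Theorem 1.1.  The terms
`C(r_i − 1, k_i − 1)` and `C(r_j − l_j, k_j − l_j)` are `0` when the lower index
is negative. Here `l_i = n − ∑_{j ≠ i} l_j`. -/
theorem chu_vandermonde_step (m n : ℕ) (hm : 0 < m) (hn : 1 ≤ n) (r : Fin m → ℂ)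
    (i : Fin m) (l : Fin m → ℕ) (hl : ∑ j ∈ Finset.univ.erase i, l j ≤ n) :
    ∑ k ∈ Finset.Nat.antidiagonalTuple m (n + 1),
      (if k i = 0 then 0 else gchoose (r i - 1) (k i - 1)) *
        ∏ j ∈ Finset.univ.erase i,
          (if k j < l j then 0 else gchoose (r j - l j) (k j - l j)) =
    (-1) ^ (n - ∑ j ∈ Finset.univ.erase i, l j) *
      gchoose ((n : ℂ) - ∑ j, r j) (n - ∑ j ∈ Finset.univ.erase i, l j) := by
  classical
  set S := ∑ j ∈ Finset.univ.erase i, l j with hS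
  set L := n - S with hL
  set t : Fin m → ℕ := fun j => if j = i then 1 else l j with ht
  have hti : t i = 1 := by simp [ht]
  have hT : ∑ j, t j = 1 + S := by
    rw [← Finset.add_sum_erase _ t (Finset.mem_univ i), hti, hS]
    congr 1
    refine Finset.sum_congr rfl fun j hj => ?_
    simp [ht, (Finset.mem_erase.mp hj).1]
  set h : Fin m → ℕ → ℂ := fun j x => if x < t j then 0 else gchoose (r j - t j) (x - t j)
    with hh
  -- Step 1: rewrite summand as a product over univ
  have step1 : ∀ k : Fin m → ℕ,
      (if k i = 0 then 0 else gchoose (r i - 1) (k i - 1)) *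
        ∏ j ∈ Finset.univ.erase i,
          (if k j < l j then 0 else gchoose (r j - l j) (k j - l j)) =
      ∏ j, h j (k j) := by
    intro k
    rw [← Finset.mul_prod_erase _ _ (Finset.mem_univ i)]
    congr 1
    · simp only [hh, hti, Nat.lt_one_iff, Nat.cast_one]
    · refine Finset.prod_congr rfl fun j hj => ?_
      have hji : j ≠ i := (Finset.mem_erase.mp hj).1
      simp only [hh, ht, if_neg hji]
  simp only [step1]
  -- Step 2: convert to piAntidiag and shift
  rw [← Finset.piAntidiag_univ_fin_eq_antidiagonalTuple]
  have hTn : 1 + S ≤ n + 1 := by omega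
  have step2 : ∑ k ∈ Finset.piAntidiag Finset.univ (n + 1), ∏ j, h j (k j) =
      ∑ a ∈ Finset.piAntidiag Finset.univ L, ∏ j, gchoose (r j - t j) (a j) := by
    rw [← Finset.sum_filter_add_sum_filter_not _ (fun k => ∀ j, t j ≤ k j)]
    have hzero : ∑ k ∈ (Finset.piAntidiag Finset.univ (n + 1)).filter
        (fun k => ¬ ∀ j, t j ≤ k j), ∏ j, h j (k j) = 0 := by
      refine Finset.sum_eq_zero fun k hk => ?_
      obtain ⟨j, hj⟩ := not_forall.mp (Finset.mem_filter.mp hk).2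
      exact Finset.prod_eq_zero (Finset.mem_univ j) (by simp [hh, Nat.lt_of_not_le hj])
    rw [hzero, add_zero]
    refine Finset.sum_nbij' (fun k j => k j - t j) (fun a j => a j + t j) ?_ ?_ ?_ ?_ ?_
    · intro k hk
      obtain ⟨hk1, hk2⟩ := Finset.mem_filter.mp hk
      obtain ⟨hsum, -⟩ := Finset.mem_piAntidiag.mp hk1
      refine Finset.mem_piAntidiag.mpr ⟨?_, fun j _ => Finset.mem_univ j⟩
      rw [Finset.sum_tsub_distrib _ (fun j _ => hk2 j)]
      rw [hsum, hT]
      omega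
    · intro a ha
      obtain ⟨hsum, -⟩ := Finset.mem_piAntidiag.mp ha
      refine Finset.mem_filter.mpr ⟨Finset.mem_piAntidiag.mpr ⟨?_, fun j _ => Finset.mem_univ j⟩,
        fun j => Nat.le_add_left _ _⟩
      rw [Finset.sum_add_distrib, hsum, hT]
      omega
    · intro k hk
      have hk2 := (Finset.mem_filter.mp hk).2
      funext j
      exact Nat.sub_add_cancel (hk2 j)
    · intro a ha
      funext j
      show a j + t j - t j = a j
      omega
    · intro k hk
      have hk2 := (Finset.mem_filter.mp hk).2
      exact Finset.prod_congr rfl fun j _ => by simp [hh, Nat.not_lt.mpr (hk2 j)]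
  rw [step2, gchoose_multi_vandermonde]
  -- Step 3: final arithmetic
  have hsum : ∑ j, (r j - (t j : ℂ)) = (∑ j, r j) - (1 + S : ℕ) := by
    rw [Finset.sum_sub_distrib, ← Nat.cast_sum, hT]
  rw [hsum]
  have hx : (∑ j, r j) - ((1 + S : ℕ) : ℂ) = ((∑ j, r j) - n) - 1 + L := by
    have : (L : ℂ) = (n : ℂ) - (S : ℂ) := by
      rw [hL]
      push_cast [Nat.cast_sub hl]
      ring
    rw [this]
    push_cast
    ring
  rw [hx, gchoose_reflect]
  congr 2
  ring
end

section
/- For positive integers n_1, n_2 and complex x_1, x_2: n_1 B_{n_1−1}(x_1) B_{n_2}(x_2) + n_2 B_{n_1}(x_1) B_{n_2−1}(x_2) = n_1 ∑_{k=0}^{n_2} C(n_2,k) B_{n_1+n_2−1−k}(x_1) B_k(x_2−x_1+1) + n_2 ∑_{k=0}^{n_1} C(n_1,k) B_{n_1+n_2−1−k}(x_2) B_k(x_1−x_2), with the convention B_{−1} := 0. -/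
open PowerSeries Finset

noncomputable section CarlitzAux

/-- generating series of Bernoulli polynomials at `x`. -/
def fbb (x : ℂ) : PowerSeries ℂ :=
  PowerSeries.mk fun n => Polynomial.aeval x ((1 / (n.factorial : ℚ)) • Polynomial.bernoulli n)

/-- normalized Bernoulli polynomial value -/
def Bq (n : ℕ) (x : ℂ) : ℂ := PowerSeries.coeff (R := ℂ) n (fbb x)

lemma Bq_eq (n : ℕ) (x : ℂ) : Bq n x = ((n.factorial : ℂ))⁻¹ * Bp n x := by
  simp only [Bq, fbb, coeff_mk, map_smul, Bp]
  rw [Rat.smul_def]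
  push_cast
  ring

lemma fb_gen (x : ℂ) :
    fbb x * (exp ℂ - 1) = PowerSeries.X * rescale x (exp ℂ) :=
  Polynomial.bernoulli_generating_function x

/-- the diagonal map `ℂ⟦u⟧ → ℂ⟦s⟧⟦t⟧`, `u ↦ t + s`. -/
def psii (f : PowerSeries ℂ) : PowerSeries (PowerSeries ℂ) :=
  PowerSeries.mk fun i => PowerSeries.mk fun j =>
    ((i + j).choose i : ℂ) * PowerSeries.coeff (R := ℂ) (i + j) f

@[simp] lemma psii_coeff (f : PowerSeries ℂ) (i j : ℕ) :
    coeff (R := ℂ) j (coeff (R := PowerSeries ℂ) i (psii f)) =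
      ((i + j).choose i : ℂ) * coeff (R := ℂ) (i + j) f := by
  simp [psii]

lemma psii_mul (f g : PowerSeries ℂ) : psii (f * g) = psii f * psii g := by
  apply PowerSeries.ext; intro i
  apply PowerSeries.ext; intro j
  have hRHS : coeff (R := ℂ) j (coeff (R := PowerSeries ℂ) i (psii f * psii g)) =
      ∑ a ∈ range (i+1), ∑ b ∈ range (j+1),
        (((a+b).choose a : ℂ) * coeff (R := ℂ) (a+b) f) *
          ((((i-a)+(j-b)).choose (i-a) : ℂ) * coeff (R := ℂ) ((i-a)+(j-b)) g) := by
    rw [PowerSeries.coeff_mul, map_sum, Nat.sum_antidiagonal_eq_sum_range_succ_mk]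
    refine Finset.sum_congr rfl fun a _ => ?_
    rw [PowerSeries.coeff_mul, Nat.sum_antidiagonal_eq_sum_range_succ_mk]
    refine Finset.sum_congr rfl fun b _ => ?_
    rw [psii_coeff, psii_coeff]
  rw [hRHS, psii_coeff, PowerSeries.coeff_mul, Nat.sum_antidiagonal_eq_sum_range_succ_mk]
  calc ((i+j).choose i : ℂ) * ∑ p ∈ range (i+j+1), coeff (R := ℂ) p f * coeff (R := ℂ) (i+j-p) g
      = ∑ p ∈ range (i+j+1), ∑ a ∈ range (i+1),
          ((p.choose a : ℂ) * (((i+j-p).choose (i-a)) : ℂ)) *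
            (coeff (R := ℂ) p f * coeff (R := ℂ) (i+j-p) g) := by
        rw [Finset.mul_sum]
        refine Finset.sum_congr rfl fun p hp => ?_
        rw [Finset.mem_range] at hp
        have hv : ((i+j).choose i : ℕ) = ∑ a ∈ range (i+1),
            p.choose a * (i+j-p).choose (i-a) := by
          have h := Nat.add_choose_eq p (i+j-p) i
          rw [Nat.sum_antidiagonal_eq_sum_range_succ_mk] at h
          have hpp : p + (i + j - p) = i + j := by omega
          rwa [hpp] at h
        rw [show ((i+j).choose i : ℂ) = ((∑ a ∈ range (i+1),
            p.choose a * (i+j-p).choose (i-a) : ℕ) : ℂ) by exact_mod_cast hv]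
        push_cast
        rw [Finset.sum_mul]
    _ = ∑ a ∈ range (i+1), ∑ p ∈ range (i+j+1),
          ((p.choose a : ℂ) * (((i+j-p).choose (i-a)) : ℂ)) *
            (coeff (R := ℂ) p f * coeff (R := ℂ) (i+j-p) g) := Finset.sum_comm
    _ = ∑ a ∈ range (i+1), ∑ b ∈ range (j+1),
        (((a+b).choose a : ℂ) * coeff (R := ℂ) (a+b) f) *
          ((((i-a)+(j-b)).choose (i-a) : ℂ) * coeff (R := ℂ) ((i-a)+(j-b)) g) := by
        refine Finset.sum_congr rfl fun a ha => ?_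
        rw [Finset.mem_range] at ha
        rw [show ∑ p ∈ range (i+j+1),
              ((p.choose a : ℂ) * (((i+j-p).choose (i-a)) : ℂ)) *
                (coeff (R := ℂ) p f * coeff (R := ℂ) (i+j-p) g)
            = ∑ p ∈ Finset.Ico a (a+j+1),
              ((p.choose a : ℂ) * (((i+j-p).choose (i-a)) : ℂ)) *
                (coeff (R := ℂ) p f * coeff (R := ℂ) (i+j-p) g) from
          (Finset.sum_subset (by
            intro p hp; rw [Finset.mem_Ico] at hp; rw [Finset.mem_range]; omega)
            (by
              intro p hp hnp
              rw [Finset.mem_range] at hp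
              rw [Finset.mem_Ico] at hnp
              push_neg at hnp
              rcases lt_or_ge p a with hlt | hge
              · rw [Nat.choose_eq_zero_of_lt hlt]; push_cast; ring
              · have : i + j - p < i - a := by omega
                rw [Nat.choose_eq_zero_of_lt this]; push_cast; ring)).symm]
        rw [Finset.sum_Ico_eq_sum_range]
        have : a + j + 1 - a = j + 1 := by omega
        rw [this]
        refine Finset.sum_congr rfl fun b hb => ?_
        rw [Finset.mem_range] at hb
        have h1 : i + j - (a + b) = (i - a) + (j - b) := by omega
        rw [h1]
        ring

lemma psii_one : psii 1 = 1 := by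
  apply PowerSeries.ext; intro i
  apply PowerSeries.ext; intro j
  rw [psii_coeff]
  by_cases hi : i = 0
  · subst hi
    by_cases hj : j = 0
    · subst hj; simp
    · simp [PowerSeries.coeff_one, hj]
  · simp [PowerSeries.coeff_one, hi, Nat.add_eq_zero]

lemma psii_sub (f g : PowerSeries ℂ) : psii (f - g) = psii f - psii g := by
  apply PowerSeries.ext; intro i
  apply PowerSeries.ext; intro j
  simp [psii_coeff, mul_sub]

lemma psii_X : psii PowerSeries.X =
    PowerSeries.X + PowerSeries.C (R := PowerSeries ℂ) PowerSeries.X := by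
  apply PowerSeries.ext; intro i
  apply PowerSeries.ext; intro j
  rw [psii_coeff, map_add]
  simp only [PowerSeries.coeff_X, PowerSeries.coeff_C, apply_ite (coeff (R := ℂ) j), map_zero,
    PowerSeries.coeff_one, PowerSeries.coeff_X]
  split_ifs <;> first | omega | simp_all [PowerSeries.coeff_X]

-- the players
def Ftt (x : ℂ) : PowerSeries (PowerSeries ℂ) := PowerSeries.map (PowerSeries.C (R := ℂ)) (fbb x)
def Fss (x : ℂ) : PowerSeries (PowerSeries ℂ) := PowerSeries.C (R := PowerSeries ℂ) (fbb x)
def Ett (x : ℂ) : PowerSeries (PowerSeries ℂ) :=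
  PowerSeries.map (PowerSeries.C (R := ℂ)) (rescale x (exp ℂ))
def Ess (x : ℂ) : PowerSeries (PowerSeries ℂ) :=
  PowerSeries.C (R := PowerSeries ℂ) (rescale x (exp ℂ))
def Gg (x : ℂ) : PowerSeries (PowerSeries ℂ) := psii (fbb x)

lemma sep_coeff (f g : PowerSeries ℂ) (i j : ℕ) :
    coeff (R := ℂ) j (coeff (R := PowerSeries ℂ) i
      (PowerSeries.map (PowerSeries.C (R := ℂ)) f * PowerSeries.C (R := PowerSeries ℂ) g)) =
      coeff (R := ℂ) i f * coeff (R := ℂ) j g := by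
  rw [PowerSeries.coeff_mul_C, PowerSeries.coeff_map, PowerSeries.coeff_C_mul]

lemma Ett_mul (a b : ℂ) : Ett a * Ett b = Ett (a + b) := by
  unfold Ett
  rw [← map_mul, exp_mul_exp_eq_exp_add]

lemma Ess_mul (a b : ℂ) : Ess a * Ess b = Ess (a + b) := by
  unfold Ess
  rw [← map_mul, exp_mul_exp_eq_exp_add]

lemma factC (n : ℕ) : ((n.factorial : ℂ)) ≠ 0 :=
  Nat.cast_ne_zero.mpr (Nat.factorial_ne_zero n)

lemma choose_cast (a b : ℕ) :
    ((a+b).choose a : ℂ) = ((a+b).factorial : ℂ) / ((a.factorial : ℂ) * (b.factorial : ℂ)) := by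
  rw [eq_div_iff (mul_ne_zero (factC a) (factC b)), ← mul_assoc]
  have h := Nat.choose_mul_factorial_mul_factorial (Nat.le_add_right a b)
  rw [Nat.add_sub_cancel_left] at h
  exact_mod_cast h

lemma coeff_exp' (n : ℕ) : coeff (R := ℂ) n (exp ℂ) = ((n.factorial : ℂ))⁻¹ := by
  rw [PowerSeries.coeff_exp]
  rw [eq_ratCast (algebraMap ℚ ℂ)]
  push_cast
  ring

lemma coeff_rescale_exp (x : ℂ) (n : ℕ) :
    coeff (R := ℂ) n (rescale x (exp ℂ)) = x ^ n * ((n.factorial : ℂ))⁻¹ := by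
  rw [PowerSeries.coeff_rescale, coeff_exp']

lemma psii_rescale_exp (x : ℂ) : psii (rescale x (exp ℂ)) = Ett x * Ess x := by
  apply PowerSeries.ext; intro i
  apply PowerSeries.ext; intro j
  rw [psii_coeff, coeff_rescale_exp]
  unfold Ett Ess
  rw [sep_coeff, coeff_rescale_exp, coeff_rescale_exp, choose_cast]
  have hi := factC i
  have hj := factC j
  have hij := factC (i+j)
  field_simp
  ring

lemma psii_exp : psii (exp ℂ) = Ett 1 * Ess 1 := by
  have := psii_rescale_exp 1
  rwa [rescale_one, RingHom.id_apply] at this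

lemma gen_t (x : ℂ) : Ftt x * (Ett 1 - 1) = PowerSeries.X * Ett x := by
  have h := congrArg (PowerSeries.map (PowerSeries.C (R := ℂ))) (fb_gen x)
  rw [map_mul, map_sub, map_one, map_mul] at h
  rw [PowerSeries.map_X] at h
  unfold Ftt Ett
  rw [rescale_one, RingHom.id_apply]
  exact h

lemma gen_s (x : ℂ) :
    Fss x * (Ess 1 - 1) = PowerSeries.C (R := PowerSeries ℂ) PowerSeries.X * Ess x := by
  have h := congrArg (PowerSeries.C (R := PowerSeries ℂ)) (fb_gen x)
  rw [map_mul, map_sub, map_one, map_mul] at h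
  unfold Fss Ess
  rw [rescale_one, RingHom.id_apply]
  exact h

lemma gen_ts (x : ℂ) :
    Gg x * (Ett 1 * Ess 1 - 1) =
      (PowerSeries.X + PowerSeries.C (R := PowerSeries ℂ) PowerSeries.X) * (Ett x * Ess x) := by
  have h := congrArg psii (fb_gen x)
  rw [psii_mul, psii_sub, psii_one, psii_mul, psii_X, psii_exp, psii_rescale_exp] at h
  exact h

lemma hPne : Ett 1 - 1 ≠ 0 := by
  intro h
  have h10 : coeff (R := ℂ) 0 (coeff (R := PowerSeries ℂ) 1 (Ett 1 - 1)) = 1 := by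
    unfold Ett
    rw [map_sub, map_sub, PowerSeries.coeff_map, coeff_rescale_exp, PowerSeries.coeff_one]
    simp [PowerSeries.coeff_C]
  rw [h] at h10
  simp at h10

lemma hQne : Ess 1 - 1 ≠ 0 := by
  intro h
  have h10 : coeff (R := ℂ) 1 (coeff (R := PowerSeries ℂ) 0 (Ess 1 - 1)) = 1 := by
    unfold Ess
    rw [map_sub, map_sub, PowerSeries.coeff_C, PowerSeries.coeff_one]
    simp [coeff_rescale_exp, PowerSeries.coeff_one]
  rw [h] at h10
  simp at h10

lemma hPQne : Ett 1 * Ess 1 - 1 ≠ 0 := by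
  intro h
  have h10 : coeff (R := ℂ) 0 (coeff (R := PowerSeries ℂ) 1 (Ett 1 * Ess 1 - 1)) = 1 := by
    unfold Ett Ess
    rw [map_sub, map_sub, PowerSeries.coeff_mul_C, PowerSeries.coeff_map,
      PowerSeries.coeff_one]
    simp [coeff_rescale_exp, PowerSeries.coeff_C_mul]
  rw [h] at h10
  simp at h10

lemma master (x₁ x₂ : ℂ) :
    (PowerSeries.X + PowerSeries.C (R := PowerSeries ℂ) PowerSeries.X) * (Ftt x₁ * Fss x₂) =
      PowerSeries.X * (Gg x₁ * Fss (x₂ - x₁ + 1)) +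
      PowerSeries.C (R := PowerSeries ℂ) PowerSeries.X * (Gg x₂ * Ftt (x₁ - x₂)) := by
  have h1 := gen_t x₁
  have hw := gen_t (x₁ - x₂)
  have h2 := gen_s x₂
  have hv := gen_s (x₂ - x₁ + 1)
  have h3 := gen_ts x₁
  have h3' := gen_ts x₂
  have e1 : Ess x₁ * Ess (x₂ - x₁ + 1) = Ess x₂ * Ess 1 := by
    rw [Ess_mul, Ess_mul, show x₁ + (x₂ - x₁ + 1) = x₂ + 1 by ring]
  have e2 : Ett x₂ * Ett (x₁ - x₂) = Ett x₁ := by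
    rw [Ett_mul, show x₂ + (x₁ - x₂) = x₁ by ring]
  set t : PowerSeries (PowerSeries ℂ) := PowerSeries.X with ht
  set s : PowerSeries (PowerSeries ℂ) := PowerSeries.C (R := PowerSeries ℂ) PowerSeries.X with hs
  have key : ((t + s) * (Ftt x₁ * Fss x₂) -
      (t * (Gg x₁ * Fss (x₂ - x₁ + 1)) + s * (Gg x₂ * Ftt (x₁ - x₂)))) *
      ((Ett 1 - 1) * (Ess 1 - 1) * (Ett 1 * Ess 1 - 1)) = 0 := by
    linear_combination
      ((t + s) * Fss x₂ * (Ess 1 - 1) * (Ett 1 * Ess 1 - 1)) * h1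
      + ((t + s) * (Ett 1 * Ess 1 - 1) * t * Ett x₁) * h2
      - (t * Fss (x₂ - x₁ + 1) * (Ett 1 - 1) * (Ess 1 - 1)) * h3
      - (t * (t + s) * Ett x₁ * Ess x₁ * (Ett 1 - 1)) * hv
      - (t * s * (t + s) * Ett x₁ * (Ett 1 - 1)) * e1
      - (s * Ftt (x₁ - x₂) * (Ett 1 - 1) * (Ess 1 - 1)) * h3'
      - (s * (t + s) * Ett x₂ * Ess x₂ * (Ess 1 - 1)) * hw
      - (t * s * (t + s) * Ess x₂ * (Ess 1 - 1)) * e2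
  have hM : (Ett 1 - 1) * (Ess 1 - 1) * (Ett 1 * Ess 1 - 1) ≠ 0 :=
    mul_ne_zero (mul_ne_zero hPne hQne) hPQne
  have h0 := (mul_eq_zero.mp key).resolve_right hM
  exact sub_eq_zero.mp h0

lemma coeff_master (m l : ℕ) (x₁ x₂ : ℂ) :
    Bq m x₁ * Bq (l+1) x₂ + Bq (m+1) x₁ * Bq l x₂ =
      (∑ k ∈ range (l+2),
        ((m + k).choose m : ℂ) * Bq (m+k) x₁ * Bq (l+1-k) (x₂ - x₁ + 1)) +
      (∑ a ∈ range (m+2),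
        ((a + l).choose a : ℂ) * Bq (a+l) x₂ * Bq (m+1-a) (x₁ - x₂)) := by
  have h := congrArg
    (fun F => coeff (R := ℂ) (l+1) (coeff (R := PowerSeries ℂ) (m+1) F)) (master x₁ x₂)
  have hL : coeff (R := ℂ) (l+1) (coeff (R := PowerSeries ℂ) (m+1)
      ((PowerSeries.X + PowerSeries.C (R := PowerSeries ℂ) PowerSeries.X) * (Ftt x₁ * Fss x₂))) =
      Bq m x₁ * Bq (l+1) x₂ + Bq (m+1) x₁ * Bq l x₂ := by
    unfold Ftt Fss
    rw [add_mul, map_add, PowerSeries.coeff_succ_X_mul, PowerSeries.coeff_C_mul, map_add,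
      PowerSeries.coeff_succ_X_mul, sep_coeff, sep_coeff]
    rfl
  have hR1 : coeff (R := ℂ) (l+1) (coeff (R := PowerSeries ℂ) (m+1)
      (PowerSeries.X * (Gg x₁ * Fss (x₂ - x₁ + 1)))) =
      ∑ k ∈ range (l+2),
        ((m + k).choose m : ℂ) * Bq (m+k) x₁ * Bq (l+1-k) (x₂ - x₁ + 1) := by
    rw [PowerSeries.coeff_succ_X_mul]
    unfold Gg Fss
    rw [PowerSeries.coeff_mul_C, PowerSeries.coeff_mul,
      Nat.sum_antidiagonal_eq_sum_range_succ_mk]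
    refine Finset.sum_congr rfl fun k hk => ?_
    rw [psii_coeff]
    simp [Bq, mul_assoc]
  have hR2 : coeff (R := ℂ) (l+1) (coeff (R := PowerSeries ℂ) (m+1)
      (PowerSeries.C (R := PowerSeries ℂ) PowerSeries.X * (Gg x₂ * Ftt (x₁ - x₂)))) =
      ∑ a ∈ range (m+2),
        ((a + l).choose a : ℂ) * Bq (a+l) x₂ * Bq (m+1-a) (x₁ - x₂) := by
    rw [PowerSeries.coeff_C_mul, PowerSeries.coeff_succ_X_mul]
    unfold Gg Ftt
    rw [PowerSeries.coeff_mul, Nat.sum_antidiagonal_eq_sum_range_succ_mk, map_sum]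
    refine Finset.sum_congr rfl fun a ha => ?_
    rw [PowerSeries.coeff_map, PowerSeries.coeff_mul_C, psii_coeff]
    simp [Bq, mul_assoc]
  rw [hL, map_add, map_add, hR1, hR2] at h
  exact h

end CarlitzAux

/-- The `m = 2` case of Lemma 2.1 (essentially Carlitz's identity).  Since
`n₁, n₂ ≥ 1`, all subscripts `n₁ - 1`, `n₂ - 1`, `n₁ + n₂ - 1 - k` are
nonnegative, so the convention `B_{-1} = 0` is not needed. -/
theorem carlitz_two (n₁ n₂ : ℕ) (h₁ : 0 < n₁) (h₂ : 0 < n₂) (x₁ x₂ : ℂ) :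
    (n₁ : ℂ) * Bp (n₁ - 1) x₁ * Bp n₂ x₂ + (n₂ : ℂ) * Bp n₁ x₁ * Bp (n₂ - 1) x₂ =
    (n₁ : ℂ) * ∑ k ∈ Finset.range (n₂ + 1),
        (n₂.choose k : ℂ) * Bp (n₁ + n₂ - 1 - k) x₁ * Bp k (x₂ - x₁ + 1) +
    (n₂ : ℂ) * ∑ k ∈ Finset.range (n₁ + 1),
        (n₁.choose k : ℂ) * Bp (n₁ + n₂ - 1 - k) x₂ * Bp k (x₁ - x₂) := by
  obtain ⟨m, rfl⟩ : ∃ m, n₁ = m + 1 := ⟨n₁ - 1, by omega⟩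
  obtain ⟨l, rfl⟩ : ∃ l, n₂ = l + 1 := ⟨n₂ - 1, by omega⟩
  have key := coeff_master m l x₁ x₂
  have eL : ((m+1 : ℕ) : ℂ) * Bp (m + 1 - 1) x₁ * Bp (l+1) x₂
      + ((l+1 : ℕ) : ℂ) * Bp (m+1) x₁ * Bp (l + 1 - 1) x₂ =
      (((m+1).factorial : ℂ) * ((l+1).factorial : ℂ)) *
        (Bq m x₁ * Bq (l+1) x₂ + Bq (m+1) x₁ * Bq l x₂) := by
    simp only [Nat.add_sub_cancel, Bq_eq]
    have h1 := factC m
    have h2 := factC l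
    have h3 := factC (m+1)
    have h4 := factC (l+1)
    field_simp
    push_cast [Nat.factorial_succ]
    ring
  have eR1 : ((m+1 : ℕ) : ℂ) * ∑ k ∈ Finset.range (l + 1 + 1),
        (((l+1).choose k : ℕ) : ℂ) * Bp (m + 1 + (l + 1) - 1 - k) x₁ * Bp k (x₂ - x₁ + 1) =
      (((m+1).factorial : ℂ) * ((l+1).factorial : ℂ)) *
        ∑ k ∈ Finset.range (l+2),
          ((m + k).choose m : ℂ) * Bq (m+k) x₁ * Bq (l+1-k) (x₂ - x₁ + 1) := by
    rw [← Finset.sum_range_reflect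
      (fun k => ((m + k).choose m : ℂ) * Bq (m+k) x₁ * Bq (l+1-k) (x₂ - x₁ + 1)) (l+2)]
    rw [Finset.mul_sum, Finset.mul_sum]
    refine Finset.sum_congr rfl fun k hk => ?_
    rw [Finset.mem_range] at hk
    have hd1 : l + 2 - 1 - k = l + 1 - k := by omega
    rw [hd1]
    have hkj : k + (l + 1 - k) = l + 1 := by omega
    set j := l + 1 - k with hj
    have hd2 : l + 1 - j = k := by omega
    have hd3 : m + 1 + (l + 1) - 1 - k = m + j := by omega
    rw [hd2, hd3, Bq_eq, Bq_eq, choose_cast m j, ← hkj, choose_cast k j]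
    have h1 := factC m
    have h2 := factC j
    have h3 := factC k
    have h4 := factC (m + j)
    have h5 := factC (k + j)
    field_simp
    push_cast [Nat.factorial_succ]
    ring
  have eR2 : ((l+1 : ℕ) : ℂ) * ∑ k ∈ Finset.range (m + 1 + 1),
        (((m+1).choose k : ℕ) : ℂ) * Bp (m + 1 + (l + 1) - 1 - k) x₂ * Bp k (x₁ - x₂) =
      (((m+1).factorial : ℂ) * ((l+1).factorial : ℂ)) *
        ∑ a ∈ Finset.range (m+2),
          ((a + l).choose a : ℂ) * Bq (a+l) x₂ * Bq (m+1-a) (x₁ - x₂) := by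
    rw [← Finset.sum_range_reflect
      (fun a => ((a + l).choose a : ℂ) * Bq (a+l) x₂ * Bq (m+1-a) (x₁ - x₂)) (m+2)]
    rw [Finset.mul_sum, Finset.mul_sum]
    refine Finset.sum_congr rfl fun k hk => ?_
    rw [Finset.mem_range] at hk
    have hd1 : m + 2 - 1 - k = m + 1 - k := by omega
    rw [hd1]
    have hkj : k + (m + 1 - k) = m + 1 := by omega
    set j := m + 1 - k with hj
    have hd2 : m + 1 - j = k := by omega
    have hd3 : m + 1 + (l + 1) - 1 - k = j + l := by omega
    rw [hd2, hd3, Bq_eq, Bq_eq, choose_cast j l, ← hkj, choose_cast k j]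
    have h1 := factC l
    have h2 := factC j
    have h3 := factC k
    have h4 := factC (j + l)
    have h5 := factC (k + j)
    field_simp
    push_cast [Nat.factorial_succ]
    ring
  rw [eL, key, mul_add, ← eR1, ← eR2]
end
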